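/- arXiv:2305.03377 — 5 statements merged into one kernel-verified Lean document; each statement's English description precedes it below -/
import Mathlib

section
/- Let f be a function on the positive integers with f(x) → ∞ as x → ∞. Then there exists an infinite pair of multiplicative complements (A,B) ∈ MC₂ such that A(x) = o(x), B(x) = o(x), and liminf_{x→∞} min{A(x),B(x)} / f(x) = 0. -/
open Filter

/-- Counting function: number of elements of `A` that are at most `x`. -/
noncomputable def cnt (A : Set ℕ) (x : ℕ) : ℕ := {a ∈ A | a ≤ x}.ncard

/-- `(A, B)` are multiplicative complements of order 2: both are sets of positive
integers and every positive integer is a product `a * b` with `a ∈ A`, `b ∈ B`. -/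
def MC2 (A B : Set ℕ) : Prop :=
  A ⊆ {n | 0 < n} ∧ B ⊆ {n | 0 < n} ∧
    ∀ n : ℕ, 0 < n → ∃ a ∈ A, ∃ b ∈ B, n = a * b

namespace Stmt4

open Finset

lemma cnt_le_card (A : Set ℕ) (x : ℕ) (s : Finset ℕ)
    (h : ∀ a, a ∈ A → a ≤ x → a ∈ s) : cnt A x ≤ s.card := by
  have hsub : {a ∈ A | a ≤ x} ⊆ (s : Set ℕ) := fun a ha => h a ha.1 ha.2
  simpa [Set.ncard_coe_finset, cnt] using Set.ncard_le_ncard hsub s.finite_toSet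

lemma modEq_prod (F : Finset ℕ) (m : ℕ → ℕ)
    (hcop : ∀ p ∈ F, ∀ q ∈ F, p ≠ q → Nat.Coprime (m p) (m q))
    {a b : ℕ} (h : ∀ q ∈ F, a ≡ b [MOD m q]) :
    a ≡ b [MOD ∏ q ∈ F, m q] := by
  induction F using Finset.cons_induction with
  | empty => simpa using Nat.modEq_one
  | cons q F hq ih =>
    rw [Finset.prod_cons]
    have hcq : Nat.Coprime (m q) (∏ p ∈ F, m p) :=
      Nat.Coprime.prod_right fun p hp =>
        hcop q (Finset.mem_cons_self q F) p (Finset.mem_cons_of_mem hp)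
          (fun e => hq (e ▸ hp))
    refine (Nat.modEq_and_modEq_iff_modEq_mul hcq).mp
      ⟨h q (Finset.mem_cons_self q F), ih ?_ ?_⟩
    · exact fun p hp p' hp' hne =>
        hcop p (Finset.mem_cons_of_mem hp) p' (Finset.mem_cons_of_mem hp') hne
    · exact fun p hp => h p (Finset.mem_cons_of_mem hp)

lemma card_residues_le (F : Finset ℕ) (m : ℕ → ℕ) (S : ℕ → Finset ℕ)
    (hm : ∀ q ∈ F, 0 < m q) (hS : ∀ q ∈ F, S q ⊆ range (m q))
    (hcop : ∀ p ∈ F, ∀ q ∈ F, p ≠ q → Nat.Coprime (m p) (m q)) :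
    ((range (∏ q ∈ F, m q)).filter
        (fun r => ∀ q ∈ F, r % m q ∈ S q)).card ≤ ∏ q ∈ F, (S q).card := by
  classical
  induction F using Finset.cons_induction with
  | empty => simp
  | cons q F hq ih =>
    rw [Finset.prod_cons, Finset.prod_cons]
    set M := ∏ p ∈ F, m p with hM
    have hMpos : 0 < M := Finset.prod_pos fun p hp => hm p (Finset.mem_cons_of_mem hp)
    have hqpos : 0 < m q := hm q (Finset.mem_cons_self q F)
    have hcq : Nat.Coprime (m q) M :=
      Nat.Coprime.prod_right fun p hp =>
        hcop q (Finset.mem_cons_self q F) p (Finset.mem_cons_of_mem hp)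
          (fun e => hq (e ▸ hp))
    have key : ((range (m q * M)).filter
        (fun r => ∀ p ∈ Finset.cons q F hq, r % m p ∈ S p)).card ≤
        ((S q) ×ˢ ((range M).filter (fun r => ∀ p ∈ F, r % m p ∈ S p))).card := by
      apply Finset.card_le_card_of_injOn (fun r => (r % m q, r % M))
      · intro r hr
        simp only [Finset.mem_coe, Finset.mem_filter, Finset.mem_range] at hr
        obtain ⟨hrlt, hrcond⟩ := hr
        refine Finset.mem_product.mpr ⟨?_, ?_⟩
        · exact hrcond q (Finset.mem_cons_self q F)
        · refine Finset.mem_filter.mpr ⟨Finset.mem_range.mpr (Nat.mod_lt _ hMpos), ?_⟩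
          intro p hp
          have hdvd : m p ∣ M := hM ▸ Finset.dvd_prod_of_mem m hp
          rw [Nat.mod_mod_of_dvd _ hdvd]
          exact hrcond p (Finset.mem_cons_of_mem hp)
      · intro r hr r' hr' heq
        simp only [Finset.coe_filter, Set.mem_setOf_eq, Finset.mem_range] at hr hr'
        have h1 : r % m q = r' % m q := congrArg Prod.fst heq
        have h2 : r % M = r' % M := congrArg Prod.snd heq
        have : r ≡ r' [MOD m q * M] :=
          (Nat.modEq_and_modEq_iff_modEq_mul hcq).mp ⟨h1, h2⟩
        exact (Nat.ModEq.eq_of_lt_of_lt this hr.1 hr'.1)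
    calc _ ≤ _ := key
    _ ≤ (S q).card * ∏ p ∈ F, (S p).card := by
        rw [Finset.card_product]
        exact Nat.mul_le_mul_left _ (ih (fun p hp => hm p (Finset.mem_cons_of_mem hp))
          (fun p hp => hS p (Finset.mem_cons_of_mem hp))
          (fun p hp p' hp' hne => hcop p (Finset.mem_cons_of_mem hp) p'
            (Finset.mem_cons_of_mem hp') hne))

lemma count_bound (A : Set ℕ) (x : ℕ) (F : Finset ℕ) (m : ℕ → ℕ) (S : ℕ → Finset ℕ)
    (hm : ∀ q ∈ F, 0 < m q) (hS : ∀ q ∈ F, S q ⊆ range (m q))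
    (hcop : ∀ p ∈ F, ∀ q ∈ F, p ≠ q → Nat.Coprime (m p) (m q))
    (hA : ∀ a ∈ A, ∀ q ∈ F, a % m q ∈ S q) :
    cnt A x ≤ (x / (∏ q ∈ F, m q) + 1) * ∏ q ∈ F, (S q).card := by
  classical
  set M := ∏ q ∈ F, m q with hM
  have hMpos : 0 < M := Finset.prod_pos hm
  set R := (range M).filter (fun r => ∀ q ∈ F, r % m q ∈ S q) with hR
  have h1 : cnt A x ≤ ((range (x+1)).filter (fun n => ∀ q ∈ F, n % m q ∈ S q)).card := by
    apply cnt_le_card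
    intro a ha hax
    exact Finset.mem_filter.mpr ⟨Finset.mem_range.mpr (Nat.lt_succ_of_le hax), hA a ha⟩
  have h2 : ((range (x+1)).filter (fun n => ∀ q ∈ F, n % m q ∈ S q)).card ≤
      ((range (x / M + 1)) ×ˢ R).card := by
    apply Finset.card_le_card_of_injOn (fun n => (n / M, n % M))
    · intro n hn
      simp only [Finset.mem_coe, Finset.mem_filter, Finset.mem_range] at hn
      refine Finset.mem_product.mpr ⟨?_, ?_⟩
      · exact Finset.mem_range.mpr (Nat.lt_succ_of_le
          (Nat.div_le_div_right (Nat.lt_succ_iff.mp hn.1)))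
      · refine Finset.mem_filter.mpr ⟨Finset.mem_range.mpr (Nat.mod_lt _ hMpos), ?_⟩
        intro q hq
        have hdvd : m q ∣ M := hM ▸ Finset.dvd_prod_of_mem m hq
        rw [Nat.mod_mod_of_dvd _ hdvd]
        exact hn.2 q hq
    · intro n hn n' hn' heq
      have h1' : n / M = n' / M := congrArg Prod.fst heq
      have h2' : n % M = n' % M := congrArg Prod.snd heq
      have e1 : n = M * (n / M) + n % M := (Nat.div_add_mod n M).symm
      rw [h1', h2', Nat.div_add_mod] at e1
      exact e1
  have h3 : ((range (x / M + 1)) ×ˢ R).card ≤ (x / M + 1) * ∏ q ∈ F, (S q).card := by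
    rw [Finset.card_product, Finset.card_range]
    exact Nat.mul_le_mul_left _ (card_residues_le F m S hm hS hcop)
  exact le_trans h1 (le_trans h2 h3)


lemma card_multiples (d m : ℕ) (hd : 0 < d) :
    ((range (d*m)).filter (fun r => d ∣ r)).card = m := by
  have himn : (range m).image (fun i => d*i) = (range (d*m)).filter (fun r => d ∣ r) := by
    ext r
    simp only [mem_image, mem_range, mem_filter]
    constructor
    · rintro ⟨i, hi, rfl⟩
      exact ⟨(mul_lt_mul_iff_right₀ hd).mpr hi, ⟨i, rfl⟩⟩
    · rintro ⟨hr, i, rfl⟩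
      exact ⟨i, (mul_lt_mul_iff_right₀ hd).mp hr, rfl⟩
  rw [← himn, Finset.card_image_of_injective _ (fun a b h => Nat.eq_of_mul_eq_mul_left hd h),
    card_range]

lemma card_SB_le (p : ℕ) (hp : Nat.Prime p) :
    (((range (p^2)).filter (fun r => r = 0 ∨ ¬ p ∣ r)).card : ℝ) ≤
      (p^2 : ℝ) * (1 - 1/(2*p)) := by
  classical
  have hsub : (range (p^2)).filter (fun r => r = 0 ∨ ¬ p ∣ r) ⊆
      insert 0 ((range (p^2)).filter (fun r => ¬ p ∣ r)) := by
    intro r hr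
    rcases Finset.mem_filter.mp hr with ⟨hr1, hr2⟩
    rcases hr2 with h | h
    · simp [h]
    · exact Finset.mem_insert_of_mem (Finset.mem_filter.mpr ⟨hr1, h⟩)
  have hcard1 : ((range (p^2)).filter (fun r => r = 0 ∨ ¬ p ∣ r)).card ≤
      1 + ((range (p^2)).filter (fun r => ¬ p ∣ r)).card := by
    calc _ ≤ (insert 0 ((range (p^2)).filter (fun r => ¬ p ∣ r))).card :=
          Finset.card_le_card hsub
    _ ≤ _ := by simpa [Nat.add_comm] using Finset.card_insert_le (0:ℕ) ((range (p^2)).filter (fun r => ¬ p ∣ r))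
  have hsplit : ((range (p^2)).filter (fun r => p ∣ r)).card +
      ((range (p^2)).filter (fun r => ¬ p ∣ r)).card = p^2 := by
    rw [Finset.card_filter_add_card_filter_not, card_range]
  have hmul : ((range (p^2)).filter (fun r => p ∣ r)).card = p := by
    have : p^2 = p * p := sq p
    rw [this, card_multiples p p hp.pos]
  have hle : ((range (p^2)).filter (fun r => r = 0 ∨ ¬ p ∣ r)).card ≤ 1 + (p^2 - p) := by omega
  have hp2 : (2:ℝ) ≤ (p:ℝ) := by exact_mod_cast hp.two_le
  have hppos : (0:ℝ) < p := by linarith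
  have hcast : ((1 + (p^2 - p) : ℕ) : ℝ) = 1 + ((p:ℝ)^2 - p) := by
    have hle2 : p ≤ p^2 := Nat.le_self_pow two_ne_zero p
    push_cast [Nat.cast_sub hle2]
    ring
  calc (((range (p^2)).filter (fun r => r = 0 ∨ ¬ p ∣ r)).card : ℝ)
      ≤ ((1 + (p^2 - p) : ℕ) : ℝ) := by exact_mod_cast hle
    _ = 1 + ((p:ℝ)^2 - p) := hcast
    _ ≤ (p:ℝ)^2 * (1 - 1/(2*p)) := by
        rw [mul_sub, mul_one]
        have : (p:ℝ)^2 * (1/(2*p)) = p/2 := by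
          field_simp
        rw [this]
        nlinarith

lemma card_SA_le (q : ℕ) (hq : Nat.Prime q) :
    ((((range q).erase 0)).card : ℝ) ≤ (q : ℝ) * (1 - 1/(2*q)) := by
  rw [Finset.card_erase_of_mem (Finset.mem_range.mpr hq.pos), card_range]
  have hp2 : (2:ℝ) ≤ (q:ℝ) := by exact_mod_cast hq.two_le
  have hcast : ((q - 1 : ℕ) : ℝ) = (q:ℝ) - 1 := by
    push_cast [Nat.cast_sub hq.one_le]
    ring
  rw [hcast, mul_sub, mul_one]
  have : (q:ℝ) * (1/(2*q)) = 1/2 := by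
    field_simp
  rw [this]
  linarith

lemma prod_one_sub_le_exp (F : Finset ℕ) (t : ℕ → ℝ) (ht : ∀ q ∈ F, 0 ≤ t q ∧ t q ≤ 1) :
    ∏ q ∈ F, (1 - t q) ≤ Real.exp (- ∑ q ∈ F, t q) := by
  have h1 : ∀ q ∈ F, 1 - t q ≤ Real.exp (-(t q)) := by
    intro q hq
    have := Real.add_one_le_exp (-(t q))
    linarith
  calc ∏ q ∈ F, (1 - t q) ≤ ∏ q ∈ F, Real.exp (-(t q)) :=
        Finset.prod_le_prod (fun q hq => by linarith [(ht q hq).2]) h1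
  _ = _ := by rw [← Real.exp_sum]; congr 1; simp

lemma isLittleO_of_bound (A : Set ℕ)
    (h : ∀ c : ℝ, 0 < c → ∃ M P : ℕ, 0 < M ∧ (∀ x, cnt A x ≤ (x / M + 1) * P) ∧
      (P : ℝ) ≤ (M : ℝ) * (c/2)) :
    (fun x : ℕ => (cnt A x : ℝ)) =o[atTop] (fun x : ℕ => (x : ℝ)) := by
  rw [Asymptotics.isLittleO_iff]
  intro c hc
  obtain ⟨M, P, hM, hcnt, hP⟩ := h c hc
  filter_upwards [eventually_ge_atTop M] with x hx
  have hxpos : (0:ℝ) ≤ (x:ℝ) := Nat.cast_nonneg x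
  have hMR : (0:ℝ) < M := by exact_mod_cast hM
  rw [Real.norm_natCast, Real.norm_natCast]
  have h1 : (cnt A x : ℝ) ≤ ((x / M + 1) * P : ℕ) := by exact_mod_cast hcnt x
  have h2 : (((x / M + 1) * P : ℕ) : ℝ) = ((x/M : ℕ) + 1 : ℝ) * P := by push_cast; ring
  have h3 : ((x/M : ℕ) : ℝ) ≤ (x:ℝ)/M := Nat.cast_div_le
  have h4 : ((x/M : ℕ) + 1 : ℝ) * P ≤ ((x:ℝ)/M + 1) * P := by
    apply mul_le_mul_of_nonneg_right _ (Nat.cast_nonneg P)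
    linarith
  have h5 : ((x:ℝ)/M + 1) * P ≤ ((x:ℝ)/M + 1) * ((M:ℝ) * (c/2)) := by
    apply mul_le_mul_of_nonneg_left hP
    positivity
  have h6 : ((x:ℝ)/M + 1) * ((M:ℝ) * (c/2)) = ((x:ℝ) + M) * (c/2) := by
    field_simp
  have h7 : ((x:ℝ) + M) * (c/2) ≤ (2*(x:ℝ)) * (c/2) := by
    have : (M:ℝ) ≤ x := by exact_mod_cast hx
    nlinarith
  calc (cnt A x : ℝ) ≤ _ := h1
  _ = _ := h2
  _ ≤ _ := h4
  _ ≤ _ := h5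
  _ = _ := h6
  _ ≤ _ := h7
  _ = c * x := by ring


section SAB
variable (PA : Set ℕ)

def SA : Set ℕ :=
  {a : ℕ | 0 < a ∧ ∀ q : ℕ, a.factorization q ≤ 1 ∧ (a.factorization q ≠ 0 → q ∈ PA)}

def SB : Set ℕ := {b : ℕ | 0 < b ∧ ∀ p ∈ PA, b.factorization p ≠ 1}

lemma fact_prod_primes (s : Finset ℕ) (hs : ∀ p ∈ s, Nat.Prime p) (q : ℕ) :
    (∏ p ∈ s, p).factorization q = if q ∈ s then 1 else 0 := by
  classical
  have hne : ∀ p ∈ s, p ≠ 0 := fun p hp => (hs p hp).pos.ne'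
  rw [Nat.factorization_prod hne]
  have : ∀ p ∈ s, (Nat.factorization p) q = if p = q then 1 else 0 := by
    intro p hp
    rw [(hs p hp).factorization, Finsupp.single_apply]
  rw [Finsupp.finset_sum_apply, Finset.sum_congr rfl this, Finset.sum_ite_eq' s q (fun _ => 1)]

lemma mc2_step (hPA : ∀ q ∈ PA, Nat.Prime q) (n : ℕ) (hn : 0 < n) :
    ∃ a ∈ SA PA, ∃ b ∈ SB PA, n = a * b := by
  classical
  set s : Finset ℕ := n.primeFactors.filter (fun p => p ∈ PA ∧ n.factorization p = 1) with hs
  have hsprime : ∀ p ∈ s, Nat.Prime p := fun p hp =>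
    Nat.prime_of_mem_primeFactors (Finset.mem_filter.mp hp).1
  set a : ℕ := ∏ p ∈ s, p with ha
  have hfa : ∀ q, a.factorization q = if q ∈ s then 1 else 0 := fact_prod_primes s hsprime
  have hadvd : a ∣ n := by
    refine dvd_trans ?_ (Nat.prod_primeFactors_dvd n)
    exact Finset.prod_dvd_prod_of_subset _ _ _ (Finset.filter_subset _ _)
  have hapos : 0 < a := Finset.prod_pos fun p hp => (hsprime p hp).pos
  set b : ℕ := n / a with hb
  have hbpos : 0 < b := Nat.div_pos (Nat.le_of_dvd hn hadvd) hapos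
  have hnab : n = a * b := by
    rw [hb, Nat.mul_div_cancel' hadvd]
  have hfb : ∀ q, b.factorization q = n.factorization q - a.factorization q := by
    intro q
    rw [hb, Nat.factorization_div hadvd]
    simp
  refine ⟨a, ⟨hapos, ?_⟩, b, ⟨hbpos, ?_⟩, hnab⟩
  · intro q
    constructor
    · rw [hfa q]; split <;> simp
    · rw [hfa q]
      split
      · rename_i hq
        exact fun _ => (Finset.mem_filter.mp hq).2.1
      · simp
  · intro p hp
    have hpp : Nat.Prime p := hPA p hp
    rw [hfb p, hfa p]
    by_cases hmem : p ∈ s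
    · have : n.factorization p = 1 := (Finset.mem_filter.mp hmem).2.2
      simp [hmem, this]
    · simp only [hmem, if_neg, Nat.sub_zero, if_false]
      intro hone
      apply hmem
      rw [hs]
      refine Finset.mem_filter.mpr ⟨?_, hp, hone⟩
      rw [← Nat.support_factorization]
      exact Finsupp.mem_support_iff.mpr (by omega)

lemma SA_not_dvd {q : ℕ} (hq : Nat.Prime q) (hqPA : q ∉ PA) :
    ∀ a ∈ SA PA, ¬ q ∣ a := by
  intro a ⟨hapos, haf⟩ hdvd
  have : a.factorization q ≠ 0 := by
    have := (Nat.Prime.dvd_iff_one_le_factorization hq hapos.ne').mp hdvd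
    omega
  exact hqPA ((haf q).2 this)

lemma SB_sq_dvd {p : ℕ} (hp : Nat.Prime p) (hpPA : p ∈ PA) :
    ∀ b ∈ SB PA, p ∣ b → p ^ 2 ∣ b := by
  intro b ⟨hbpos, hbf⟩ hdvd
  have h1 : 1 ≤ b.factorization p :=
    (Nat.Prime.dvd_iff_one_le_factorization hp hbpos.ne').mp hdvd
  have h2 : b.factorization p ≠ 1 := hbf p hpPA
  exact (Nat.Prime.pow_dvd_iff_le_factorization hp hbpos.ne').mpr (by omega)

end SAB

lemma primeSum_tendsto :
    Tendsto (fun M => ∑ q ∈ (range M).filter Nat.Prime, (1 / q : ℝ)) atTop atTop := by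
  have hnn : ∀ n : ℕ, 0 ≤ Set.indicator {p | Nat.Prime p} (fun n : ℕ => (1 : ℝ) / n) n :=
    fun n => Set.indicator_nonneg (fun p _ => by positivity) n
  have h2 : Tendsto (fun n => ∑ i ∈ range n,
      Set.indicator {p | Nat.Prime p} (fun n : ℕ => (1:ℝ)/n) i) atTop atTop := by
    by_contra hc
    exact not_summable_one_div_on_primes
      ((summable_iff_not_tendsto_nat_atTop_of_nonneg hnn).mpr hc)
  have heq : (fun M => ∑ q ∈ (range M).filter Nat.Prime, (1 / q : ℝ)) =
      fun M => ∑ i ∈ range M, Set.indicator {p | Nat.Prime p} (fun n : ℕ => (1:ℝ)/n) i := by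
    funext M
    rw [Finset.sum_indicator_eq_sum_filter]
    simp [Set.mem_setOf_eq]
  rw [heq]
  exact h2

lemma exists_next (f : ℕ → ℝ) (hf : Tendsto f atTop atTop) (n : ℕ) (C : ℝ) :
    ∃ M : ℕ, n < M ∧ (1 : ℝ) ≤ ∑ q ∈ (Finset.Ioc n M).filter Nat.Prime, (1 / q : ℝ) ∧
      ∀ x : ℕ, M ≤ x → C ≤ f x := by
  obtain ⟨T, hT⟩ := (hf.eventually (eventually_ge_atTop C)).exists_forall_of_atTop
  have hS := primeSum_tendsto.eventually (eventually_ge_atTop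
    ((∑ q ∈ (range (n+1)).filter Nat.Prime, (1 / q : ℝ)) + 1))
  obtain ⟨M₀, hM₀⟩ := (hS.and (eventually_ge_atTop (max (n+1) T + 1))).exists
  refine ⟨M₀ - 1, ?_, ?_, ?_⟩
  · have := hM₀.2; omega
  · have hM1 : M₀ = (M₀ - 1) + 1 := by have := hM₀.2; omega
    have hsplit : (range M₀).filter Nat.Prime =
        ((range (n+1)).filter Nat.Prime) ∪ ((Finset.Ioc n (M₀-1)).filter Nat.Prime) := by
      rw [← Finset.filter_union]
      congr 1
      ext i
      simp only [Finset.mem_union, Finset.mem_range, Finset.mem_Ioc]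
      omega
    have hdisj : Disjoint ((range (n+1)).filter Nat.Prime)
        ((Finset.Ioc n (M₀-1)).filter Nat.Prime) := by
      refine Finset.disjoint_left.mpr ?_
      intro i hi hi'
      simp only [Finset.mem_filter, Finset.mem_range, Finset.mem_Ioc] at hi hi'
      omega
    have := hM₀.1
    rw [hsplit, Finset.sum_union hdisj] at this
    linarith
  · intro x hx
    apply hT
    have := hM₀.2
    omega

variable (f : ℕ → ℝ) (hf : Tendsto f atTop atTop)

noncomputable def NN : ℕ → ℕ
  | 0 => 0
  | k + 1 => (exists_next f hf (NN k) ((k+1) * 2 ^ (NN k + 1))).choose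

lemma NN_lt (k : ℕ) : NN f hf k < NN f hf (k+1) :=
  (exists_next f hf (NN f hf k) ((k+1) * 2 ^ (NN f hf k + 1))).choose_spec.1

lemma NN_sum (k : ℕ) : (1:ℝ) ≤
    ∑ q ∈ (Finset.Ioc (NN f hf k) (NN f hf (k+1))).filter Nat.Prime, (1 / q : ℝ) :=
  (exists_next f hf (NN f hf k) ((k+1) * 2 ^ (NN f hf k + 1))).choose_spec.2.1

lemma NN_f (k : ℕ) : ∀ x : ℕ, NN f hf (k+1) ≤ x →
    ((k+1) * 2 ^ (NN f hf k + 1) : ℝ) ≤ f x :=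
  (exists_next f hf (NN f hf k) ((k+1) * 2 ^ (NN f hf k + 1))).choose_spec.2.2

lemma NN_mono : StrictMono (NN f hf) := strictMono_nat_of_lt_succ (NN_lt f hf)

lemma NN_le_of_le {a b : ℕ} (h : a ≤ b) : NN f hf a ≤ NN f hf b := (NN_mono f hf).le_iff_le.mpr h

lemma le_NN (k : ℕ) : k ≤ NN f hf k := (NN_mono f hf).le_apply

/-- intervals (NN a, NN (a+1)] are pairwise disjoint -/
lemma NN_interval_eq {a b q : ℕ} (ha : NN f hf a < q ∧ q ≤ NN f hf (a+1))
    (hb : NN f hf b < q ∧ q ≤ NN f hf (b+1)) : a = b := by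
  by_contra hne
  rcases Nat.lt_or_ge a b with h | h
  · have : NN f hf (a+1) ≤ NN f hf b := NN_le_of_le f hf h
    omega
  · have hba : b < a := by omega
    have : NN f hf (b+1) ≤ NN f hf a := NN_le_of_le f hf hba
    omega




def PA : Set ℕ :=
  {q : ℕ | Nat.Prime q ∧ ∃ j : ℕ, NN f hf (2*j+1) < q ∧ q ≤ NN f hf (2*j+2)}

lemma exists_K (c : ℝ) (hc : 0 < c) : ∃ K : ℕ, Real.exp (-(K:ℝ)/2) ≤ c/2 := by
  obtain ⟨K, hK⟩ := exists_nat_ge (2 * Real.log (2/c))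
  refine ⟨K, ?_⟩
  have h2c : (0:ℝ) < 2/c := by positivity
  have : -(K:ℝ)/2 ≤ -Real.log (2/c) := by linarith
  calc Real.exp (-(K:ℝ)/2) ≤ Real.exp (-Real.log (2/c)) := Real.exp_le_exp.mpr this
  _ = c/2 := by
      rw [Real.exp_neg, Real.exp_log h2c]
      field_simp

lemma prod_cards_le (F : Finset ℕ) (m : ℕ → ℕ) (S : ℕ → Finset ℕ) (K : ℕ)
    (hFprime : ∀ q ∈ F, Nat.Prime q)
    (hcard : ∀ q ∈ F, ((S q).card : ℝ) ≤ (m q : ℝ) * (1 - 1/(2*(q:ℝ))))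
    (hsum : (K:ℝ) ≤ ∑ q ∈ F, (1/q : ℝ)) :
    ((∏ q ∈ F, (S q).card : ℕ) : ℝ) ≤ ((∏ q ∈ F, m q : ℕ) : ℝ) * Real.exp (-(K:ℝ)/2) := by
  have hP : ((∏ q ∈ F, (S q).card : ℕ) : ℝ) = ∏ q ∈ F, ((S q).card : ℝ) := by push_cast; rfl
  have hMc : ((∏ q ∈ F, m q : ℕ) : ℝ) = ∏ q ∈ F, (m q : ℝ) := by push_cast; rfl
  rw [hP, hMc]
  have step1 : ∏ q ∈ F, ((S q).card : ℝ) ≤ ∏ q ∈ F, ((m q : ℝ) * (1 - 1/(2*(q:ℝ)))) :=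
    Finset.prod_le_prod (fun q _ => by positivity) hcard
  have step2 : ∏ q ∈ F, ((m q : ℝ) * (1 - 1/(2*(q:ℝ)))) =
      (∏ q ∈ F, (m q : ℝ)) * ∏ q ∈ F, (1 - 1/(2*(q:ℝ))) := Finset.prod_mul_distrib
  have ht : ∀ q ∈ F, 0 ≤ 1/(2*(q:ℝ)) ∧ 1/(2*(q:ℝ)) ≤ 1 := by
    intro q hq
    have h2 : (2:ℝ) ≤ (q:ℝ) := by exact_mod_cast (hFprime q hq).two_le
    refine ⟨by positivity, ?_⟩
    rw [div_le_one (by linarith)]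
    linarith
  have step3 : ∏ q ∈ F, (1 - 1/(2*(q:ℝ))) ≤ Real.exp (- ∑ q ∈ F, 1/(2*(q:ℝ))) :=
    prod_one_sub_le_exp F _ ht
  have hsum2 : (K:ℝ)/2 ≤ ∑ q ∈ F, 1/(2*(q:ℝ)) := by
    have he : ∑ q ∈ F, 1/(2*(q:ℝ)) = (1/2) * ∑ q ∈ F, (1/q : ℝ) := by
      rw [Finset.mul_sum]
      congr 1
      funext q
      ring
    rw [he]
    linarith
  have step4 : Real.exp (- ∑ q ∈ F, 1/(2*(q:ℝ))) ≤ Real.exp (-(K:ℝ)/2) :=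
    Real.exp_le_exp.mpr (by linarith)
  have hMnn : (0:ℝ) ≤ ∏ q ∈ F, (m q : ℝ) := Finset.prod_nonneg (fun q _ => by positivity)
  calc ∏ q ∈ F, ((S q).card : ℝ) ≤ _ := step1
  _ = _ := step2
  _ ≤ (∏ q ∈ F, (m q : ℝ)) * Real.exp (-(K:ℝ)/2) :=
      mul_le_mul_of_nonneg_left (le_trans step3 step4) hMnn

section sides
variable (K : ℕ)

/-- primes in even intervals, not in PA -/
noncomputable def FA : Finset ℕ :=
  (range K).biUnion (fun j => (Finset.Ioc (NN f hf (2*j)) (NN f hf (2*j+1))).filter Nat.Prime)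

/-- primes in odd intervals, in PA -/
noncomputable def FB : Finset ℕ :=
  (range K).biUnion (fun j => (Finset.Ioc (NN f hf (2*j+1)) (NN f hf (2*j+2))).filter Nat.Prime)

lemma FA_prime : ∀ q ∈ FA f hf K, Nat.Prime q := by
  intro q hq
  obtain ⟨j, _, hqj⟩ := Finset.mem_biUnion.mp hq
  exact (Finset.mem_filter.mp hqj).2

lemma FB_prime : ∀ q ∈ FB f hf K, Nat.Prime q := by
  intro q hq
  obtain ⟨j, _, hqj⟩ := Finset.mem_biUnion.mp hq
  exact (Finset.mem_filter.mp hqj).2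

lemma FA_not_PA : ∀ q ∈ FA f hf K, q ∉ PA f hf := by
  intro q hq
  obtain ⟨j, _, hqj⟩ := Finset.mem_biUnion.mp hq
  simp only [Finset.mem_filter, Finset.mem_Ioc] at hqj
  rintro ⟨_, i, hi1, hi2⟩
  have := NN_interval_eq f hf ⟨hqj.1.1, hqj.1.2⟩ ⟨hi1, hi2⟩
  omega

lemma FB_PA : ∀ q ∈ FB f hf K, q ∈ PA f hf := by
  intro q hq
  obtain ⟨j, _, hqj⟩ := Finset.mem_biUnion.mp hq
  simp only [Finset.mem_filter, Finset.mem_Ioc] at hqj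
  exact ⟨hqj.2, j, hqj.1.1, hqj.1.2⟩

lemma FA_sum : (K:ℝ) ≤ ∑ q ∈ FA f hf K, (1/q : ℝ) := by
  rw [FA, Finset.sum_biUnion]
  · calc (K:ℝ) = ∑ _j ∈ range K, (1:ℝ) := by simp
    _ ≤ _ := Finset.sum_le_sum (fun j _ => NN_sum f hf (2*j))
  · intro i _ j _ hij
    refine Finset.disjoint_left.mpr ?_
    intro q hq hq'
    simp only [Finset.mem_filter, Finset.mem_Ioc] at hq hq'
    have := NN_interval_eq f hf ⟨hq.1.1, hq.1.2⟩ ⟨hq'.1.1, hq'.1.2⟩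
    omega

lemma FB_sum : (K:ℝ) ≤ ∑ q ∈ FB f hf K, (1/q : ℝ) := by
  rw [FB, Finset.sum_biUnion]
  · calc (K:ℝ) = ∑ _j ∈ range K, (1:ℝ) := by simp
    _ ≤ _ := Finset.sum_le_sum (fun j _ => NN_sum f hf (2*j+1))
  · intro i _ j _ hij
    refine Finset.disjoint_left.mpr ?_
    intro q hq hq'
    simp only [Finset.mem_filter, Finset.mem_Ioc] at hq hq'
    have := NN_interval_eq f hf ⟨hq.1.1, hq.1.2⟩ ⟨hq'.1.1, hq'.1.2⟩
    omega

end sides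

lemma littleO_A :
    (fun x : ℕ => (cnt (SA (PA f hf)) x : ℝ)) =o[atTop] (fun x : ℕ => (x : ℝ)) := by
  apply isLittleO_of_bound
  intro c hc
  obtain ⟨K, hK⟩ := exists_K c hc
  set F := FA f hf K with hFdef
  have hFprime := FA_prime f hf K
  refine ⟨∏ q ∈ F, q, ∏ q ∈ F, ((range q).erase 0).card,
    Finset.prod_pos (fun q hq => (hFprime q hq).pos), ?_, ?_⟩
  · intro x
    apply count_bound _ _ F (fun q => q) (fun q => (range q).erase 0)
      (fun q hq => (hFprime q hq).pos) (fun q _ => Finset.erase_subset _ _)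
      (fun p hp q hq hne => (Nat.coprime_primes (hFprime p hp) (hFprime q hq)).mpr hne)
    intro a ha q hq
    have hqp := hFprime q hq
    have hnd := SA_not_dvd (PA f hf) hqp (FA_not_PA f hf K q hq) a ha
    refine Finset.mem_erase.mpr ⟨?_, Finset.mem_range.mpr (Nat.mod_lt _ hqp.pos)⟩
    intro hmod
    exact hnd (Nat.dvd_iff_mod_eq_zero.mpr hmod)
  · calc ((∏ q ∈ F, ((range q).erase 0).card : ℕ) : ℝ)
        ≤ ((∏ q ∈ F, q : ℕ) : ℝ) * Real.exp (-(K:ℝ)/2) :=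
          prod_cards_le F _ _ K hFprime
            (fun q hq => card_SA_le q (hFprime q hq)) (FA_sum f hf K)
    _ ≤ _ := mul_le_mul_of_nonneg_left hK (Nat.cast_nonneg _)

lemma littleO_B :
    (fun x : ℕ => (cnt (SB (PA f hf)) x : ℝ)) =o[atTop] (fun x : ℕ => (x : ℝ)) := by
  apply isLittleO_of_bound
  intro c hc
  obtain ⟨K, hK⟩ := exists_K c hc
  set F := FB f hf K with hFdef
  have hFprime := FB_prime f hf K
  refine ⟨∏ q ∈ F, q^2, ∏ q ∈ F, ((range (q^2)).filter (fun r => r = 0 ∨ ¬ q ∣ r)).card,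
    Finset.prod_pos (fun q hq => pow_pos (hFprime q hq).pos 2), ?_, ?_⟩
  · intro x
    apply count_bound _ _ F (fun q => q^2)
      (fun q => (range (q^2)).filter (fun r => r = 0 ∨ ¬ q ∣ r))
      (fun q hq => pow_pos (hFprime q hq).pos 2) (fun q _ => Finset.filter_subset _ _)
      (fun p hp q hq hne =>
        Nat.Coprime.pow 2 2 ((Nat.coprime_primes (hFprime p hp) (hFprime q hq)).mpr hne))
    intro b hb q hq
    have hqp := hFprime q hq
    have hsq := SB_sq_dvd (PA f hf) hqp (FB_PA f hf K q hq) b hb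
    refine Finset.mem_filter.mpr
      ⟨Finset.mem_range.mpr (Nat.mod_lt _ (pow_pos hqp.pos 2)), ?_⟩
    by_cases hdvd : q ∣ b
    · left
      exact Nat.dvd_iff_mod_eq_zero.mp (hsq hdvd)
    · right
      intro hmod
      exact hdvd ((Nat.dvd_mod_iff (dvd_pow_self q two_ne_zero)).mp hmod)
  · calc ((∏ q ∈ F, ((range (q^2)).filter (fun r => r = 0 ∨ ¬ q ∣ r)).card : ℕ) : ℝ)
        ≤ ((∏ q ∈ F, q^2 : ℕ) : ℝ) * Real.exp (-(K:ℝ)/2) :=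
          prod_cards_le F _ _ K hFprime
            (fun q hq => by push_cast; exact_mod_cast card_SB_le q (hFprime q hq)) (FB_sum f hf K)
    _ ≤ _ := mul_le_mul_of_nonneg_left hK (Nat.cast_nonneg _)


lemma infinite_of_unbounded (S : Set ℕ) (h : ∀ n : ℕ, ∃ m ∈ S, n < m) : S.Infinite := by
  intro hfin
  obtain ⟨ub, hub⟩ := hfin.bddAbove
  obtain ⟨m, hm, hmgt⟩ := h ub
  exact absurd (hub hm) (by omega)

lemma interval_prime (k : ℕ) :
    ∃ q : ℕ, Nat.Prime q ∧ NN f hf k < q ∧ q ≤ NN f hf (k+1) := by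
  by_contra hc
  push_neg at hc
  have hempty : (Finset.Ioc (NN f hf k) (NN f hf (k+1))).filter Nat.Prime = ∅ := by
    rw [Finset.filter_eq_empty_iff]
    intro q hq hqp
    rcases Finset.mem_Ioc.mp hq with ⟨h1, h2⟩
    exact absurd h2 (by have := hc q hqp h1; omega)
  have := NN_sum f hf k
  rw [hempty] at this
  simp at this
  linarith

lemma PA_prime : ∀ q ∈ PA f hf, Nat.Prime q := fun _ hq => hq.1

lemma prime_mem_SA {q : ℕ} (hq : Nat.Prime q) (hqPA : q ∈ PA f hf) : q ∈ SA (PA f hf) := by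
  refine ⟨hq.pos, fun p => ?_⟩
  rw [hq.factorization, Finsupp.single_apply]
  constructor
  · split <;> omega
  · split
    · rename_i h; rw [← h]; exact fun _ => hqPA
    · simp

lemma prime_mem_SB {q : ℕ} (hq : Nat.Prime q) (hqPA : q ∉ PA f hf) : q ∈ SB (PA f hf) := by
  refine ⟨hq.pos, fun p hp => ?_⟩
  rw [hq.factorization, Finsupp.single_apply]
  split
  · rename_i h; rw [← h] at hp; exact absurd hp hqPA
  · simp

lemma SA_infinite : (SA (PA f hf)).Infinite := by
  apply infinite_of_unbounded
  intro n
  obtain ⟨q, hqp, hq1, hq2⟩ := interval_prime f hf (2*n+1)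
  have hqPA : q ∈ PA f hf := ⟨hqp, n, hq1, hq2⟩
  refine ⟨q, prime_mem_SA f hf hqp hqPA, ?_⟩
  have := le_NN f hf (2*n+1)
  omega

lemma SB_infinite : (SB (PA f hf)).Infinite := by
  apply infinite_of_unbounded
  intro n
  obtain ⟨q, hqp, hq1, hq2⟩ := interval_prime f hf (2*n)
  have hqPA : q ∉ PA f hf := by
    rintro ⟨_, i, hi1, hi2⟩
    have := NN_interval_eq f hf ⟨hq1, hq2⟩ ⟨hi1, hi2⟩
    omega
  refine ⟨q, prime_mem_SB f hf hqp hqPA, ?_⟩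
  have := le_NN f hf (2*n)
  omega

lemma cntA_phase (k : ℕ) :
    cnt (SA (PA f hf)) (NN f hf (2*k+1)) ≤ 2 ^ (NN f hf (2*k) + 1) := by
  classical
  have h := cnt_le_card (SA (PA f hf)) (NN f hf (2*k+1))
    (((range (NN f hf (2*k) + 1)).powerset).image (fun t => ∏ p ∈ t, p)) ?_
  · calc _ ≤ _ := h
    _ ≤ ((range (NN f hf (2*k) + 1)).powerset).card := Finset.card_image_le
    _ = 2 ^ (NN f hf (2*k) + 1) := by rw [Finset.card_powerset, card_range]
  · intro a ha hax
    obtain ⟨hapos, haf⟩ := ha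
    have hsf : Squarefree a :=
      (Nat.squarefree_iff_factorization_le_one hapos.ne').mpr (fun p => (haf p).1)
    refine Finset.mem_image.mpr ⟨a.primeFactors, ?_, Nat.prod_primeFactors_of_squarefree hsf⟩
    rw [Finset.mem_powerset]
    intro p hp
    have hpfact : a.factorization p ≠ 0 := by
      rw [← Nat.support_factorization] at hp
      exact Finsupp.mem_support_iff.mp hp
    obtain ⟨hpp, j, hj1, hj2⟩ := (haf p).2 hpfact
    have hpa : p ≤ a := Nat.le_of_dvd hapos (Nat.dvd_of_mem_primeFactors hp)
    have hjk : j < k := by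
      by_contra hge
      push_neg at hge
      have h1 : NN f hf (2*k+1) ≤ NN f hf (2*j+1) := NN_le_of_le f hf (by omega)
      omega
    have h2 : NN f hf (2*j+2) ≤ NN f hf (2*k) := NN_le_of_le f hf (by omega)
    rw [Finset.mem_range]
    omega

lemma liminf_zero :
    Filter.liminf (fun x : ℕ =>
      (((min (cnt (SA (PA f hf)) x) (cnt (SB (PA f hf)) x) : ℝ) / f x : ℝ) : EReal))
      Filter.atTop = 0 := by
  set g : ℕ → EReal := fun x =>
    (((min (cnt (SA (PA f hf)) x) (cnt (SB (PA f hf)) x) : ℝ) / f x : ℝ) : EReal) with hg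
  apply le_antisymm
  · -- liminf ≤ 0
    have key : ∀ k : ℕ, Filter.liminf g Filter.atTop ≤ ((1/(2*(k:ℝ)+1) : ℝ) : EReal) := by
      intro k
      apply liminf_le_of_frequently_le'
      rw [frequently_atTop]
      intro a
      set j := max k a with hj
      set x := NN f hf (2*j+1) with hx
      refine ⟨x, ?_, ?_⟩
      · have := le_NN f hf (2*j+1)
        omega
      · set D : ℝ := (2:ℝ) ^ (NN f hf (2*j) + 1) with hD
        have hDpos : 0 < D := by positivity
        have hfx : ((2*j+1) : ℝ) * D ≤ f x := by
          have h := NN_f f hf (2*j) x (le_refl x)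
          rw [hD]
          push_cast at h ⊢
          linarith
        have hfpos : 0 < f x := lt_of_lt_of_le (by positivity) hfx
        have hcntA : (cnt (SA (PA f hf)) x : ℝ) ≤ D := by
          rw [hD]
          exact_mod_cast cntA_phase f hf j
        have hminD : min ((cnt (SA (PA f hf)) x : ℝ)) ((cnt (SB (PA f hf)) x : ℝ)) ≤ D :=
          le_trans (min_le_left _ _) hcntA
        have hminnn : (0:ℝ) ≤ min ((cnt (SA (PA f hf)) x : ℝ)) ((cnt (SB (PA f hf)) x : ℝ)) :=
          le_min (Nat.cast_nonneg _) (Nat.cast_nonneg _)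
        have hdiv : min ((cnt (SA (PA f hf)) x : ℝ)) ((cnt (SB (PA f hf)) x : ℝ)) / f x
            ≤ 1/(2*(k:ℝ)+1) := by
          have h1 : min ((cnt (SA (PA f hf)) x : ℝ)) ((cnt (SB (PA f hf)) x : ℝ)) / f x
              ≤ D / (((2*j+1) : ℝ) * D) := by
            apply div_le_div₀ hDpos.le hminD (by positivity) hfx
          have h2 : D / (((2*j+1) : ℝ) * D) = 1/(2*(j:ℝ)+1) := by
            field_simp
          have h3 : 1/(2*(j:ℝ)+1) ≤ 1/(2*(k:ℝ)+1) := by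
            apply div_le_div_of_nonneg_left one_pos.le (by positivity)
            have : (k:ℝ) ≤ j := by exact_mod_cast le_max_left k a
            linarith
          calc _ ≤ _ := h1
          _ = _ := h2
          _ ≤ _ := h3
        rw [hg]
        exact EReal.coe_le_coe_iff.mpr hdiv
    -- conclude
    by_contra hc
    push_neg at hc
    obtain ⟨r, hr0, hrL⟩ := EReal.lt_iff_exists_real_btwn.mp hc
    have hrpos : (0:ℝ) < r := by exact_mod_cast EReal.coe_lt_coe_iff.mp (by exact_mod_cast hr0)
    obtain ⟨k, hk⟩ := exists_nat_gt (1/r)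
    have h1 : Filter.liminf g Filter.atTop ≤ ((1/(2*(k:ℝ)+1) : ℝ) : EReal) := key k
    have h2 : (1/(2*(k:ℝ)+1) : ℝ) < r := by
      rw [div_lt_iff₀ (by positivity)]
      rw [div_lt_iff₀ hrpos] at hk
      nlinarith
    have h3 : ((1/(2*(k:ℝ)+1) : ℝ) : EReal) < (r : EReal) := EReal.coe_lt_coe_iff.mpr h2
    exact absurd (lt_of_le_of_lt (le_trans h1 h3.le) hrL) (lt_irrefl _)
  · -- 0 ≤ liminf
    refine le_liminf_of_le (by isBoundedDefault) ?_
    have hev : ∀ᶠ x : ℕ in atTop, (1:ℝ) ≤ f x := hf.eventually (eventually_ge_atTop 1)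
    filter_upwards [hev] with x hx
    rw [hg]
    apply EReal.coe_nonneg.mpr
    positivity


end Stmt4

theorem stmt_4 (f : ℕ → ℝ) (hf : Filter.Tendsto f Filter.atTop Filter.atTop) :
    ∃ A B : Set ℕ, MC2 A B ∧ A.Infinite ∧ B.Infinite ∧
      (fun x : ℕ => (cnt A x : ℝ)) =o[Filter.atTop] (fun x : ℕ => (x : ℝ)) ∧
      (fun x : ℕ => (cnt B x : ℝ)) =o[Filter.atTop] (fun x : ℕ => (x : ℝ)) ∧
      Filter.liminf (fun x : ℕ =>
          (((min (cnt A x) (cnt B x) : ℝ) / f x : ℝ) : EReal)) Filter.atTop = 0 := by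
  refine ⟨Stmt4.SA (Stmt4.PA f hf), Stmt4.SB (Stmt4.PA f hf),
    ⟨fun a ha => ha.1, fun b hb => hb.1,
      Stmt4.mc2_step (Stmt4.PA f hf) (Stmt4.PA_prime f hf)⟩,
    Stmt4.SA_infinite f hf, Stmt4.SB_infinite f hf,
    Stmt4.littleO_A f hf, Stmt4.littleO_B f hf, Stmt4.liminf_zero f hf⟩
end

section
/- Suppose f is a positive function on the positive integers such that the series ∑_{n=1}^{∞} f(n)/n² converges. Then there is no pair of multiplicative complements (A,B) ∈ MC₂ such that A(x) = O(f(x)) and B(x) = o(x). -/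
open Filter

open Classical in
noncomputable def AF (A : Set ℕ) (x : ℕ) : Finset ℕ := (Finset.Icc 1 x).filter (· ∈ A)

lemma mem_AF {A : Set ℕ} {x a : ℕ} : a ∈ AF A x ↔ (1 ≤ a ∧ a ≤ x) ∧ a ∈ A := by
  classical
  simp [AF, Finset.mem_filter, Finset.mem_Icc]

lemma cnt_eq {A : Set ℕ} (hA : A ⊆ {n | 0 < n}) (x : ℕ) : cnt A x = (AF A x).card := by
  classical
  rw [cnt, ← Set.ncard_coe_finset]
  congr 1
  ext a
  simp only [AF, Finset.coe_filter, Finset.mem_Icc, Set.mem_setOf_eq]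
  constructor
  · rintro ⟨ha, hx⟩; exact ⟨⟨hA ha, hx⟩, ha⟩
  · rintro ⟨⟨_, hx⟩, ha⟩; exact ⟨ha, hx⟩

lemma cnt_le_self {B : Set ℕ} (hB : B ⊆ {n | 0 < n}) (y : ℕ) : cnt B y ≤ y := by
  rw [cnt_eq hB]
  calc (AF B y).card ≤ (Finset.Icc 1 y).card := by
        classical exact Finset.card_filter_le _ _
    _ = y := by simp [Nat.card_Icc]

lemma tele (F : ℕ → ℝ) (a m : ℕ) (h : a ≤ m) :
    ∑ n ∈ Finset.Icc a m, (F n - F (n + 1)) = F a - F (m + 1) := by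
  induction m with
  | zero => interval_cases a; simp
  | succ k ih =>
    rcases Nat.lt_or_ge a (k + 1) with h' | h'
    · rw [Finset.sum_Icc_succ_top (by omega), ih (by omega)]
      ring
    · have : a = k + 1 := by omega
      subst this
      simp

lemma count_lower {A B : Set ℕ} (h : MC2 A B) (x : ℕ) :
    x ≤ ∑ a ∈ AF A x, cnt B (x / a) := by
  classical
  obtain ⟨hA, hB, hprod⟩ := h
  choose a ha b hb hab using hprod
  set F : ℕ → ℕ × ℕ := fun n => if hn : 0 < n then (a n hn, b n hn) else (0, 0) with hF
  set T : Finset (ℕ × ℕ) :=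
    (AF A x).biUnion (fun u => (AF B (x / u)).image (fun v => (u, v))) with hT
  have hmaps : ∀ n ∈ Finset.Icc 1 x, F n ∈ T := by
    intro n hn
    rw [Finset.mem_Icc] at hn
    have hn0 : 0 < n := hn.1
    have hax : a n hn0 ∈ A := ha n hn0
    have hbx : b n hn0 ∈ B := hb n hn0
    have ha0 : 0 < a n hn0 := hA hax
    have hb0 : 0 < b n hn0 := hB hbx
    have hmul : a n hn0 * b n hn0 = n := (hab n hn0).symm
    have hale : a n hn0 ≤ x := by
      calc a n hn0 ≤ a n hn0 * b n hn0 := Nat.le_mul_of_pos_right _ hb0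
        _ = n := hmul
        _ ≤ x := hn.2
    have hble : b n hn0 ≤ x / a n hn0 := by
      rw [Nat.le_div_iff_mul_le ha0]
      calc b n hn0 * a n hn0 = n := by rw [mul_comm]; exact hmul
        _ ≤ x := hn.2
    rw [hT, Finset.mem_biUnion]
    refine ⟨a n hn0, mem_AF.mpr ⟨⟨ha0, hale⟩, hax⟩, ?_⟩
    rw [Finset.mem_image]
    refine ⟨b n hn0, mem_AF.mpr ⟨⟨hb0, hble⟩, hbx⟩, ?_⟩
    simp [hF, hn0]
  have hinj : Set.InjOn F (Finset.Icc 1 x) := by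
    intro n hn m hm hnm
    simp only [Finset.coe_Icc, Set.mem_Icc] at hn hm
    have hn0 : 0 < n := hn.1
    have hm0 : 0 < m := hm.1
    simp only [hF, dif_pos hn0, dif_pos hm0, Prod.mk.injEq] at hnm
    calc n = a n hn0 * b n hn0 := hab n hn0
      _ = a m hm0 * b m hm0 := by rw [hnm.1, hnm.2]
      _ = m := (hab m hm0).symm
  calc x = (Finset.Icc 1 x).card := by simp [Nat.card_Icc]
    _ ≤ T.card := Finset.card_le_card_of_injOn F hmaps hinj
    _ ≤ ∑ u ∈ AF A x, ((AF B (x / u)).image (fun v => (u, v))).card :=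
        Finset.card_biUnion_le
    _ ≤ ∑ u ∈ AF A x, cnt B (x / u) := by
        refine Finset.sum_le_sum fun u _ => ?_
        rw [cnt_eq hB]
        exact Finset.card_image_le


lemma sum_inv_AF_le {A : Set ℕ} (hA : A ⊆ {n | 0 < n}) (f : ℕ → ℝ)
    (hfpos : ∀ n : ℕ, 1 ≤ n → 0 < f n)
    (hsum : Summable (fun n : ℕ => f (n + 1) / ((n + 1 : ℕ) : ℝ) ^ 2))
    (C : ℝ) (N₀ : ℕ) (hC : 0 ≤ C) (hbd : ∀ n, N₀ ≤ n → (cnt A n : ℝ) ≤ C * f n)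
    (m : ℕ) :
    ∑ a ∈ AF A m, ((a : ℝ))⁻¹
      ≤ 1 + (N₀ : ℝ) + C * ∑' n : ℕ, f (n + 1) / ((n + 1 : ℕ) : ℝ) ^ 2 := by
  classical
  set Sf := ∑' n : ℕ, f (n + 1) / ((n + 1 : ℕ) : ℝ) ^ 2 with hSf
  have hfnn : ∀ n : ℕ, 0 ≤ f (n + 1) / ((n + 1 : ℕ) : ℝ) ^ 2 := fun n =>
    le_of_lt (div_pos (hfpos _ (by omega)) (by positivity))
  set d : ℕ → ℝ := fun n => ((n : ℝ))⁻¹ - (((n + 1 : ℕ) : ℝ))⁻¹ with hd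
  have hd0 : ∀ n : ℕ, 1 ≤ n → 0 ≤ d n := by
    intro n h
    have hle : (((n : ℕ)) : ℝ) ≤ ((n + 1 : ℕ) : ℝ) := by push_cast; linarith
    have h1 : (0 : ℝ) < (n : ℝ) := by exact_mod_cast h
    simp only [hd, sub_nonneg]
    exact inv_anti₀ h1 hle
  have key : ∀ a ∈ AF A m, ((a : ℝ))⁻¹ = (((m + 1 : ℕ) : ℝ))⁻¹ + ∑ n ∈ Finset.Icc a m, d n := by
    intro a ha
    obtain ⟨⟨h1, h2⟩, _⟩ := mem_AF.mp ha
    rw [hd, tele (fun n => ((n : ℝ))⁻¹) a m h2]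
    ring
  rw [Finset.sum_congr rfl key, Finset.sum_add_distrib]
  have hcard : ∑ _a ∈ AF A m, (((m + 1 : ℕ) : ℝ))⁻¹ ≤ 1 := by
    rw [Finset.sum_const, nsmul_eq_mul]
    have h1 : (AF A m).card ≤ m + 1 := by
      calc (AF A m).card ≤ (Finset.Icc 1 m).card := Finset.card_filter_le _ _
        _ = m := by simp [Nat.card_Icc]
        _ ≤ m + 1 := by omega
    have h2 : (0 : ℝ) < ((m + 1 : ℕ) : ℝ) := by positivity
    rw [← div_eq_mul_inv, div_le_one h2]
    exact_mod_cast h1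
  have hswap : ∑ a ∈ AF A m, ∑ n ∈ Finset.Icc a m, d n
      = ∑ n ∈ Finset.Icc 1 m, (cnt A n : ℝ) * d n := by
    have h1 : ∀ a ∈ AF A m, ∑ n ∈ Finset.Icc a m, d n
        = ∑ n ∈ Finset.Icc 1 m, if a ≤ n then d n else 0 := by
      intro a ha
      obtain ⟨⟨ha1, ha2⟩, _⟩ := mem_AF.mp ha
      rw [show Finset.Icc a m = (Finset.Icc 1 m).filter (fun n => a ≤ n) by
            ext n; simp only [Finset.mem_filter, Finset.mem_Icc]; omega,
          Finset.sum_filter]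
    rw [Finset.sum_congr rfl h1, Finset.sum_comm]
    refine Finset.sum_congr rfl fun n hn => ?_
    rw [Finset.mem_Icc] at hn
    have h2 : (AF A m).filter (fun a => a ≤ n) = AF A n := by
      ext a
      simp only [Finset.mem_filter, mem_AF]
      constructor
      · rintro ⟨⟨⟨u1, u2⟩, u3⟩, u4⟩; exact ⟨⟨u1, u4⟩, u3⟩
      · rintro ⟨⟨u1, u4⟩, u3⟩; exact ⟨⟨⟨u1, u4.trans hn.2⟩, u3⟩, u4⟩
    rw [← Finset.sum_filter, h2, Finset.sum_const, nsmul_eq_mul, cnt_eq hA]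
  rw [hswap]
  have hterm : ∀ n ∈ Finset.Icc 1 m, (cnt A n : ℝ) * d n
      ≤ C * (f n / ((n : ℝ)) ^ 2) + (if n < N₀ then 1 else 0) := by
    intro n hn
    rw [Finset.mem_Icc] at hn
    have hn1 : 1 ≤ n := hn.1
    have hnp : (0 : ℝ) < (n : ℝ) := by exact_mod_cast hn1
    have hnp1 : (0 : ℝ) < ((n + 1 : ℕ) : ℝ) := by positivity
    have hdlesq : d n ≤ ((n : ℝ) ^ 2)⁻¹ := by
      have : d n = (((n : ℝ)) * ((n + 1 : ℕ) : ℝ))⁻¹ := by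
        rw [hd]
        field_simp
        push_cast; ring
      rw [this]
      apply inv_anti₀ (by positivity)
      rw [sq]
      have : (n : ℝ) ≤ ((n + 1 : ℕ) : ℝ) := by push_cast; linarith
      nlinarith
    have hdlen : d n ≤ ((n : ℝ))⁻¹ := by
      have h2 : (0:ℝ) ≤ (((n + 1 : ℕ) : ℝ))⁻¹ := by positivity
      simp only [hd]
      linarith
    rcases Nat.lt_or_ge n N₀ with hlt | hge
    · have h1 : (cnt A n : ℝ) ≤ (n : ℝ) := by exact_mod_cast cnt_le_self hA n
      have h2 : (cnt A n : ℝ) * d n ≤ (n : ℝ) * ((n : ℝ))⁻¹ :=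
        mul_le_mul h1 hdlen (hd0 n hn1) (le_of_lt hnp)
      have h3 : (n : ℝ) * ((n : ℝ))⁻¹ = 1 := mul_inv_cancel₀ (ne_of_gt hnp)
      have h4 : 0 ≤ C * (f n / ((n : ℝ)) ^ 2) := by
        apply mul_nonneg hC
        exact le_of_lt (div_pos (hfpos n hn1) (by positivity))
      rw [if_pos hlt]
      linarith
    · have h1 : (cnt A n : ℝ) ≤ C * f n := hbd n hge
      have h2 : (cnt A n : ℝ) * d n ≤ (C * f n) * (((n : ℝ)) ^ 2)⁻¹ :=
        mul_le_mul h1 hdlesq (hd0 n hn1) (mul_nonneg hC (le_of_lt (hfpos n hn1)))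
      rw [if_neg (by omega)]
      have : (C * f n) * (((n : ℝ)) ^ 2)⁻¹ = C * (f n / ((n : ℝ)) ^ 2) := by
        rw [div_eq_mul_inv]; ring
      linarith
  calc ∑ _a ∈ AF A m, (((m + 1 : ℕ) : ℝ))⁻¹ + ∑ n ∈ Finset.Icc 1 m, (cnt A n : ℝ) * d n
      ≤ 1 + (∑ n ∈ Finset.Icc 1 m, (C * (f n / ((n : ℝ)) ^ 2) + (if n < N₀ then 1 else 0))) := by
        exact add_le_add hcard (Finset.sum_le_sum hterm)
    _ = 1 + (C * ∑ n ∈ Finset.Icc 1 m, f n / ((n : ℝ)) ^ 2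
          + ∑ n ∈ Finset.Icc 1 m, (if n < N₀ then (1:ℝ) else 0)) := by
        rw [Finset.sum_add_distrib, Finset.mul_sum]
    _ ≤ 1 + (C * Sf + (N₀ : ℝ)) := by
        have hs1 : ∑ n ∈ Finset.Icc 1 m, f n / ((n : ℝ)) ^ 2 ≤ Sf := by
          rw [show Finset.Icc 1 m = Finset.Ico 1 (m+1) from by rw [Finset.Ico_add_one_right_eq_Icc],
              Finset.sum_Ico_eq_sum_range]
          simp only [Nat.add_sub_cancel]
          calc ∑ i ∈ Finset.range m, f (1 + i) / ((1 + i : ℕ) : ℝ) ^ 2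
              = ∑ i ∈ Finset.range m, f (i + 1) / ((i + 1 : ℕ) : ℝ) ^ 2 := by
                refine Finset.sum_congr rfl fun i _ => by rw [Nat.add_comm]
            _ ≤ Sf := Summable.sum_le_tsum _ (fun i _ => hfnn i) hsum
        have hs2 : ∑ n ∈ Finset.Icc 1 m, (if n < N₀ then (1:ℝ) else 0) ≤ (N₀ : ℝ) := by
          rw [Finset.sum_boole]
          have : ((Finset.Icc 1 m).filter (fun n => n < N₀)) ⊆ Finset.Ico 1 N₀ := by
            intro n hn
            simp only [Finset.mem_filter, Finset.mem_Icc] at hn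
            rw [Finset.mem_Ico]
            omega
          have hcard2 := Finset.card_le_card this
          rw [Nat.card_Ico] at hcard2
          have : ((Finset.Icc 1 m).filter (fun n => n < N₀)).card ≤ N₀ := by omega
          exact_mod_cast this
        have := mul_le_mul_of_nonneg_left hs1 hC
        linarith
    _ ≤ 1 + (N₀ : ℝ) + C * Sf := by linarith

theorem stmt_6 (f : ℕ → ℝ) (hfpos : ∀ n : ℕ, 1 ≤ n → 0 < f n)
    (hsum : Summable (fun n : ℕ => f (n + 1) / ((n + 1 : ℕ) : ℝ) ^ 2)) :
    ¬ ∃ A B : Set ℕ, MC2 A B ∧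
        (fun x : ℕ => (cnt A x : ℝ)) =O[Filter.atTop] (fun x : ℕ => f x) ∧
        (fun x : ℕ => (cnt B x : ℝ)) =o[Filter.atTop] (fun x : ℕ => (x : ℝ)) := by
  classical
  rintro ⟨A, B, hMC, hOA, hoB⟩
  obtain ⟨hA, hB, hprod⟩ := hMC
  -- Big-O data
  obtain ⟨C, hCpos, hCbd⟩ := hOA.exists_pos
  rw [Asymptotics.isBigOWith_iff, eventually_atTop] at hCbd
  obtain ⟨N₀', hN₀⟩ := hCbd
  set N₀ : ℕ := max N₀' 1 with hN₀def
  have hbd : ∀ n, N₀ ≤ n → (cnt A n : ℝ) ≤ C * f n := by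
    intro n hn
    have h1 := hN₀ n (le_trans (le_max_left _ _) hn)
    have hf := hfpos n (le_trans (le_max_right _ _) hn)
    rw [Real.norm_eq_abs, Real.norm_eq_abs, abs_of_pos hf,
      abs_of_nonneg (by positivity : (0:ℝ) ≤ (cnt A n : ℝ))] at h1
    exact h1
  -- the series over A of 1/a
  set g : ℕ → ℝ := fun n => if n ∈ A then ((n : ℝ))⁻¹ else 0 with hgdef
  have hg0 : ∀ n, 0 ≤ g n := by
    intro n
    simp only [hgdef]
    split_ifs
    · positivity
    · exact le_refl 0
  have hgAF : ∀ (F : Finset ℕ), (∀ a ∈ F, a ∈ A) → ∑ a ∈ F, ((a : ℝ))⁻¹ = ∑ a ∈ F, g a := by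
    intro F hF
    refine Finset.sum_congr rfl fun a ha => ?_
    simp only [hgdef]
    simp [hF a ha]
  have hgbd : ∀ m : ℕ, ∑ n ∈ Finset.range m, g n
      ≤ 1 + (N₀ : ℝ) + C * ∑' n : ℕ, f (n + 1) / ((n + 1 : ℕ) : ℝ) ^ 2 := by
    intro m
    have hsub : (Finset.range m).filter (· ∈ A) ⊆ AF A m := by
      intro a ha
      simp only [Finset.mem_filter, Finset.mem_range] at ha
      exact mem_AF.mpr ⟨⟨hA ha.2, by omega⟩, ha.2⟩
    calc ∑ n ∈ Finset.range m, g n = ∑ n ∈ (Finset.range m).filter (· ∈ A), ((n : ℝ))⁻¹ := by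
          rw [Finset.sum_filter]
      _ ≤ ∑ a ∈ AF A m, ((a : ℝ))⁻¹ := by
          refine Finset.sum_le_sum_of_subset_of_nonneg hsub fun a _ _ => by positivity
      _ ≤ _ := sum_inv_AF_le hA f hfpos hsum C N₀ (le_of_lt hCpos) hbd m
  have hgsum : Summable g := summable_of_sum_range_le hg0 hgbd
  set S : ℝ := ∑' n, g n with hSdef
  have hS0 : 0 ≤ S := tsum_nonneg hg0
  have hfin : ∀ (F : Finset ℕ), ∑ a ∈ F, g a ≤ S := fun F =>
    Summable.sum_le_tsum F (fun a _ => hg0 a) hgsum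
  -- little-o data
  set ε : ℝ := (2 * (S + 1))⁻¹ with hεdef
  have hεpos : 0 < ε := by rw [hεdef]; positivity
  have hεS : ε * S ≤ 1 / 2 := by
    rw [hεdef]
    rw [inv_mul_le_iff₀ (by positivity)]
    nlinarith
  have hoB' := hoB.def hεpos
  rw [eventually_atTop] at hoB'
  obtain ⟨N₁, hN₁⟩ := hoB'
  set N : ℕ := max N₁ 1 with hNdef
  have hN1 : 1 ≤ N := le_max_right _ _
  have hNbig : ∀ y : ℕ, N ≤ y → (cnt B y : ℝ) ≤ ε * y := by
    intro y hy
    have h1 := hN₁ y (le_trans (le_max_left _ _) hy)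
    rw [Real.norm_eq_abs, Real.norm_eq_abs, abs_of_nonneg (by positivity : (0:ℝ) ≤ (cnt B y : ℝ)),
      abs_of_nonneg (by positivity : (0:ℝ) ≤ (y : ℝ))] at h1
    exact h1
  -- tail of the series
  have hT : Tendsto (fun i => ∑' n, g (n + i)) atTop (nhds 0) := tendsto_sum_nat_add g
  have hT2 : ∀ᶠ i in atTop, ∑' n, g (n + i) < 1 / 2 :=
    hT.eventually_lt_const (by norm_num)
  rw [eventually_atTop] at hT2
  obtain ⟨m₀, hm₀⟩ := hT2
  -- choose x
  set x : ℕ := N * (m₀ + 1) with hxdef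
  have hx1 : 1 ≤ x := by
    rw [hxdef]; exact Nat.one_le_iff_ne_zero.mpr (by positivity)
  have hxN : x / N = m₀ + 1 := by rw [hxdef]; exact Nat.mul_div_cancel_left _ (by omega)
  have hxpos : (0 : ℝ) < (x : ℝ) := by exact_mod_cast hx1
  set m : ℕ := x / N + 1 with hmdef
  have hTm : ∑' n, g (n + m) < 1 / 2 := hm₀ m (by omega)
  -- main inequality
  have hmain : (x : ℝ) ≤ ∑ a ∈ AF A x, (cnt B (x / a) : ℝ) := by
    exact_mod_cast count_lower ⟨hA, hB, hprod⟩ x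
  set P : Finset ℕ := (AF A x).filter (fun a => N ≤ x / a) with hPdef
  set Q : Finset ℕ := (AF A x).filter (fun a => ¬ N ≤ x / a) with hQdef
  rw [← Finset.sum_filter_add_sum_filter_not (AF A x) (fun a => N ≤ x / a)] at hmain
  -- bound on P
  have hPbound : ∑ a ∈ P, (cnt B (x / a) : ℝ) ≤ (x : ℝ) * (1 / 2) := by
    have step1 : ∀ a ∈ P, (cnt B (x / a) : ℝ) ≤ ε * (x : ℝ) * ((a : ℝ))⁻¹ := by
      intro a ha
      rw [hPdef, Finset.mem_filter] at ha
      obtain ⟨haA, haN⟩ := ha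
      obtain ⟨⟨ha1, _⟩, _⟩ := mem_AF.mp haA
      have hap : (0 : ℝ) < (a : ℝ) := by exact_mod_cast ha1
      calc (cnt B (x / a) : ℝ) ≤ ε * ((x / a : ℕ) : ℝ) := hNbig _ haN
        _ ≤ ε * ((x : ℝ) / (a : ℝ)) :=
            mul_le_mul_of_nonneg_left (Nat.cast_div_le) (le_of_lt hεpos)
        _ = ε * (x : ℝ) * ((a : ℝ))⁻¹ := by rw [div_eq_mul_inv]; ring
    calc ∑ a ∈ P, (cnt B (x / a) : ℝ) ≤ ∑ a ∈ P, ε * (x : ℝ) * ((a : ℝ))⁻¹ :=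
          Finset.sum_le_sum step1
      _ = ε * (x : ℝ) * ∑ a ∈ P, ((a : ℝ))⁻¹ := by rw [Finset.mul_sum]
      _ ≤ ε * (x : ℝ) * S := by
          refine mul_le_mul_of_nonneg_left ?_ (by positivity)
          rw [hgAF P (fun a ha => (mem_AF.mp (Finset.mem_of_mem_filter a ha)).2)]
          exact hfin P
      _ = (x : ℝ) * (ε * S) := by ring
      _ ≤ (x : ℝ) * (1 / 2) := mul_le_mul_of_nonneg_left hεS (le_of_lt hxpos)
  -- bound on Q
  have hQmem : ∀ a ∈ Q, m ≤ a ∧ a ∈ A ∧ 1 ≤ a := by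
    intro a ha
    rw [hQdef, Finset.mem_filter] at ha
    obtain ⟨haA, haN⟩ := ha
    obtain ⟨⟨ha1, hax⟩, haA'⟩ := mem_AF.mp haA
    refine ⟨?_, haA', ha1⟩
    by_contra hcon
    push_neg at hcon
    have h1 : a ≤ x / N := by omega
    have h2 : a * N ≤ x := (Nat.le_div_iff_mul_le (by omega)).mp h1
    have h3 : N ≤ x / a := (Nat.le_div_iff_mul_le (by omega)).mpr (by rw [Nat.mul_comm]; exact h2)
    exact haN h3
  have hQbound : ∑ a ∈ Q, (cnt B (x / a) : ℝ) < (x : ℝ) * (1 / 2) := by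
    have step1 : ∀ a ∈ Q, (cnt B (x / a) : ℝ) ≤ (x : ℝ) * g a := by
      intro a ha
      obtain ⟨ham, haA, ha1⟩ := hQmem a ha
      have hap : (0 : ℝ) < (a : ℝ) := by exact_mod_cast ha1
      have h1 : (cnt B (x / a) : ℝ) ≤ ((x / a : ℕ) : ℝ) := by
        exact_mod_cast cnt_le_self hB (x / a)
      have h2 : ((x / a : ℕ) : ℝ) ≤ (x : ℝ) / (a : ℝ) := Nat.cast_div_le
      have h3 : g a = ((a : ℝ))⁻¹ := by simp only [hgdef]; simp [haA]
      rw [h3]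
      calc (cnt B (x / a) : ℝ) ≤ (x : ℝ) / (a : ℝ) := le_trans h1 h2
        _ = (x : ℝ) * ((a : ℝ))⁻¹ := by rw [div_eq_mul_inv]
    have step2 : ∑ a ∈ Q, g a ≤ ∑' n, g (n + m) := by
      have hinj : Set.InjOn (· - m) (Q : Set ℕ) := by
        intro a ha b hb hab
        have h1 := (hQmem a (by exact_mod_cast ha)).1
        have h2 := (hQmem b (by exact_mod_cast hb)).1
        simp only at hab
        omega
      have himg : ∑ k ∈ Q.image (· - m), g (k + m) = ∑ a ∈ Q, g a := by
        rw [Finset.sum_image (fun a ha b hb hab => hinj ha hb hab)]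
        refine Finset.sum_congr rfl fun a ha => ?_
        have h1 := (hQmem a ha).1
        congr 1
        omega
      rw [← himg]
      exact Summable.sum_le_tsum _ (fun k _ => hg0 _) ((summable_nat_add_iff m).mpr hgsum)
    calc ∑ a ∈ Q, (cnt B (x / a) : ℝ) ≤ ∑ a ∈ Q, (x : ℝ) * g a := Finset.sum_le_sum step1
      _ = (x : ℝ) * ∑ a ∈ Q, g a := by rw [Finset.mul_sum]
      _ ≤ (x : ℝ) * ∑' n, g (n + m) := mul_le_mul_of_nonneg_left step2 (le_of_lt hxpos)
      _ < (x : ℝ) * (1 / 2) := mul_lt_mul_of_pos_left hTm hxpos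
  have : (x : ℝ) < (x : ℝ) := by
    calc (x : ℝ) ≤ ∑ a ∈ P, (cnt B (x / a) : ℝ) + ∑ a ∈ Q, (cnt B (x / a) : ℝ) := hmain
      _ < (x : ℝ) * (1 / 2) + (x : ℝ) * (1 / 2) := by
          exact add_lt_add_of_le_of_lt hPbound hQbound
      _ = (x : ℝ) := by ring
  exact lt_irrefl _ this
end

section
/- Let Q be a set of prime numbers such that ∑_{q ∈ Q} 1/q = ∞, and let A = { n ∈ ℤ⁺ : n is squarefree and every prime divisor of n lies in Q }. Then there exists a set B of positive integers such that (A,B) ∈ MC₂ and B(x) = o(x). -/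
open Filter

namespace Stmt12Aux

open Finset


lemma sf_prod (s : Finset ℕ) (h : ∀ p ∈ s, p.Prime) : Squarefree (∏ p ∈ s, p) := by
  induction s using Finset.induction_on with
  | empty => simp [squarefree_one]
  | @insert p s hps ih =>
    rw [Finset.prod_insert hps]
    have hpp := h p (mem_insert_self p s)
    have hco : Nat.Coprime p (∏ q ∈ s, q) := by
      apply Nat.Coprime.prod_right
      intro q hq
      exact (Nat.coprime_primes hpp (h q (mem_insert_of_mem hq))).2 (fun e => hps (e ▸ hq))
    exact (Nat.squarefree_mul hco).2 ⟨hpp.squarefree, ih (fun q hq => h q (mem_insert_of_mem hq))⟩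

lemma prime_count (p : ℕ) (hp : p.Prime) :
    ((Finset.range (p^2)).filter (fun r => p ∣ r → p^2 ∣ r)).card = p^2 - p + 1 := by
  classical
  have h2 := hp.two_le
  have hbad : ((Finset.range (p^2)).filter (fun r => ¬ (p ∣ r → p^2 ∣ r))).card = p - 1 := by
    have himg : ((Finset.range (p^2)).filter (fun r => ¬ (p ∣ r → p^2 ∣ r)))
        = (Finset.Ico 1 p).image (fun k => p * k) := by
      ext r
      simp only [Finset.mem_filter, Finset.mem_range, Finset.mem_image, Finset.mem_Ico,
        _root_.not_imp]
      constructor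
      · rintro ⟨hr, hpr, hnpr⟩
        obtain ⟨k, rfl⟩ := hpr
        refine ⟨k, ⟨?_, ?_⟩, rfl⟩
        · rcases Nat.eq_zero_or_pos k with hk | hk
          · exfalso; apply hnpr; simp [hk]
          · exact hk
        · by_contra hk
          push_neg at hk
          have : p^2 ≤ p * k := by nlinarith
          omega
      · rintro ⟨k, ⟨hk1, hkp⟩, rfl⟩
        refine ⟨by nlinarith, ⟨k, rfl⟩, ?_⟩
        intro hdvd
        have hpk : p ∣ k := by
          rcases hdvd with ⟨c, hc⟩
          have : p * k = p * (p * c) := by rw [hc]; ring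
          exact ⟨c, Nat.eq_of_mul_eq_mul_left (by omega) this⟩
        have := Nat.le_of_dvd (by omega) hpk
        omega
    rw [himg, Finset.card_image_of_injective _ (fun a b hab =>
      Nat.eq_of_mul_eq_mul_left (by omega) hab)]
    simp
  have htot := Finset.card_filter_add_card_filter_not
    (s := Finset.range (p^2)) (p := fun r => p ∣ r → p^2 ∣ r)
  rw [Finset.card_range] at htot
  have hple : p ≤ p^2 := by nlinarith
  omega

lemma crt_count : ∀ (S : Finset ℕ), (∀ q ∈ S, Nat.Prime q) →
    ((Finset.range (∏ q ∈ S, q^2)).filter (fun r => ∀ q ∈ S, q ∣ r → q^2 ∣ r)).card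
      = ∏ q ∈ S, (q^2 - q + 1) := by
  classical
  intro S
  induction S using Finset.induction_on with
  | empty => simp
  | @insert p s hps ih =>
    intro hpr
    have hpp : p.Prime := hpr p (mem_insert_self p s)
    have hs : ∀ q ∈ s, Nat.Prime q := fun q hq => hpr q (mem_insert_of_mem hq)
    set M' : ℕ := ∏ q ∈ s, q^2 with hM'
    have hM'pos : 0 < M' := Finset.prod_pos (fun q hq => pow_pos (hs q hq).pos 2)
    have hpM' : ¬ p ∣ M' := by
      intro hd
      obtain ⟨q, hq, hdq⟩ := hpp.prime.exists_mem_finset_dvd hd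
      have : p = q := by
        have := (Nat.Prime.dvd_of_dvd_pow (p := p) (n := 2) hpp hdq)
        exact ((Nat.prime_dvd_prime_iff_eq hpp (hs q hq)).1 this)
      exact hps (this ▸ hq)
    have hco : Nat.Coprime (p^2) M' :=
      Nat.Coprime.pow_left 2 ((Nat.Prime.coprime_iff_not_dvd hpp).2 hpM')
    have hM : ∏ q ∈ insert p s, q^2 = p^2 * M' := Finset.prod_insert hps
    -- the bijection
    have key : ((Finset.range (p^2 * M')).filter
          (fun r => ∀ q ∈ insert p s, q ∣ r → q^2 ∣ r)).card
        = (((Finset.range (p^2)).filter (fun r => p ∣ r → p^2 ∣ r)) ×ˢ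
           ((Finset.range M').filter (fun r => ∀ q ∈ s, q ∣ r → q^2 ∣ r))).card := by
      apply Finset.card_bij (fun r _ => (r % p^2, r % M'))
      · -- maps into
        intro r hr
        simp only [Finset.mem_filter, Finset.mem_range] at hr
        obtain ⟨hrlt, hrgood⟩ := hr
        simp only [Finset.mem_product, Finset.mem_filter, Finset.mem_range]
        refine ⟨⟨Nat.mod_lt _ (pow_pos hpp.pos 2), ?_⟩, Nat.mod_lt _ hM'pos, ?_⟩
        · intro hd
          rw [Nat.dvd_mod_iff (dvd_pow_self p (by norm_num))] at hd
          rw [Nat.dvd_mod_iff dvd_rfl]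
          exact hrgood p (mem_insert_self p s) hd
        · intro q hq hd
          have hq2M' : q^2 ∣ M' := Finset.dvd_prod_of_mem _ hq
          have hqM' : q ∣ M' := dvd_trans (dvd_pow_self q (by norm_num)) hq2M'
          rw [Nat.dvd_mod_iff hqM'] at hd
          rw [Nat.dvd_mod_iff hq2M']
          exact hrgood q (mem_insert_of_mem hq) hd
      · -- injective
        intro r1 h1 r2 h2 heq
        simp only [Finset.mem_filter, Finset.mem_range] at h1 h2
        have he1 : r1 % p^2 = r2 % p^2 := congrArg Prod.fst heq
        have he2 : r1 % M' = r2 % M' := congrArg Prod.snd heq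
        have hmod : r1 ≡ r2 [MOD p^2 * M'] :=
          (Nat.modEq_and_modEq_iff_modEq_mul hco).1 ⟨he1, he2⟩
        have := hmod
        unfold Nat.ModEq at this
        rwa [Nat.mod_eq_of_lt h1.1, Nat.mod_eq_of_lt h2.1] at this
      · -- surjective
        rintro ⟨a, b⟩ hab
        simp only [Finset.mem_product, Finset.mem_filter, Finset.mem_range] at hab
        obtain ⟨⟨ha, hag⟩, hb, hbg⟩ := hab
        set k := Nat.chineseRemainder hco a b with hk
        obtain ⟨hra, hrb⟩ := k.prop
        set r := (k : ℕ) with hrdef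
        have hrlt : r < p^2 * M' :=
          Nat.chineseRemainder_lt_mul hco a b (pow_ne_zero 2 hpp.pos.ne') (by omega)
        refine ⟨r, ?_, ?_⟩
        · simp only [Finset.mem_filter, Finset.mem_range]
          refine ⟨hrlt, ?_⟩
          intro q hq hd
          rcases Finset.mem_insert.1 hq with rfl | hqs
          · have hmod : r % q^2 = a := by
              have := hra; unfold Nat.ModEq at this
              rw [this, Nat.mod_eq_of_lt ha]
            have : q ∣ a := by
              rw [← hmod, Nat.dvd_mod_iff (dvd_pow_self q (by norm_num))]; exact hd
            have h2a : q^2 ∣ a := hag this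
            rw [← Nat.dvd_mod_iff (dvd_refl (q^2)), hmod]
            exact h2a
          · have hq2M' : q^2 ∣ M' := Finset.dvd_prod_of_mem _ hqs
            have hqM' : q ∣ M' := dvd_trans (dvd_pow_self q (by norm_num)) hq2M'
            have hmod : r % M' = b := by
              have := hrb; unfold Nat.ModEq at this
              rw [this, Nat.mod_eq_of_lt hb]
            have : q ∣ b := by rw [← hmod, Nat.dvd_mod_iff hqM']; exact hd
            have h2b : q^2 ∣ b := hbg q hqs this
            rw [← Nat.dvd_mod_iff hq2M', hmod]
            exact h2b
        · have h1 : r % p^2 = a := by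
            have := hra; unfold Nat.ModEq at this
            rw [this, Nat.mod_eq_of_lt ha]
          have h2 : r % M' = b := by
            have := hrb; unfold Nat.ModEq at this
            rw [this, Nat.mod_eq_of_lt hb]
          simp [h1, h2]
    rw [hM, key, Finset.card_product, Finset.prod_insert hps, prime_count p hpp, ih hs]


lemma count_bound (S : Finset ℕ) (hS : ∀ q ∈ S, Nat.Prime q) (x : ℕ)
    (hcrt : ((Finset.range (∏ q ∈ S, q^2)).filter
        (fun r => ∀ q ∈ S, q ∣ r → q^2 ∣ r)).card = ∏ q ∈ S, (q^2 - q + 1)) :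
    ((Finset.range (x+1)).filter (fun b => ∀ q ∈ S, q ∣ b → q^2 ∣ b)).card
      ≤ (x / (∏ q ∈ S, q^2) + 1) * ∏ q ∈ S, (q^2 - q + 1) := by
  classical
  set M : ℕ := ∏ q ∈ S, q^2 with hM
  have hMpos : 0 < M := Finset.prod_pos (fun q hq => pow_pos (hS q hq).pos 2)
  have hmaps : ∀ b ∈ (Finset.range (x+1)).filter (fun b => ∀ q ∈ S, q ∣ b → q^2 ∣ b),
      (b / M, b % M) ∈ (Finset.range (x / M + 1)) ×ˢ
        ((Finset.range M).filter (fun r => ∀ q ∈ S, q ∣ r → q^2 ∣ r)) := by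
    intro b hb
    simp only [Finset.mem_filter, Finset.mem_range] at hb
    obtain ⟨hble, hbg⟩ := hb
    simp only [Finset.mem_product, Finset.mem_filter, Finset.mem_range]
    refine ⟨by
      have : b / M ≤ x / M := Nat.div_le_div_right (by omega)
      omega, Nat.mod_lt _ hMpos, ?_⟩
    intro q hq hd
    have hq2M : q^2 ∣ M := Finset.dvd_prod_of_mem _ hq
    have hqM : q ∣ M := dvd_trans (dvd_pow_self q (by norm_num)) hq2M
    rw [Nat.dvd_mod_iff hqM] at hd
    rw [Nat.dvd_mod_iff hq2M]
    exact hbg q hq hd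
  have hinj : Set.InjOn (fun b => (b / M, b % M))
      ((Finset.range (x+1)).filter (fun b => ∀ q ∈ S, q ∣ b → q^2 ∣ b)) := by
    intro b1 _ b2 _ heq
    have h1 : b1 / M = b2 / M := congrArg Prod.fst heq
    have h2 : b1 % M = b2 % M := congrArg Prod.snd heq
    have e1 := (Nat.div_add_mod b1 M).symm
    have e2 := (Nat.div_add_mod b2 M).symm
    rw [e1, e2, h1, h2]
  calc ((Finset.range (x+1)).filter (fun b => ∀ q ∈ S, q ∣ b → q^2 ∣ b)).card
      ≤ ((Finset.range (x / M + 1)) ×ˢ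
        ((Finset.range M).filter (fun r => ∀ q ∈ S, q ∣ r → q^2 ∣ r))).card :=
        Finset.card_le_card_of_injOn _ hmaps hinj
    _ = (x / M + 1) * ∏ q ∈ S, (q^2 - q + 1) := by
        rw [Finset.card_product, Finset.card_range, hcrt]


lemma choose_S (Q : Set ℕ)
    (hdiv : ¬ Summable (fun q : Q => (1 : ℝ) / ((q : ℕ) : ℝ))) (C : ℝ) :
    ∃ S : Finset ℕ, (∀ q ∈ S, q ∈ Q) ∧ C ≤ ∑ q ∈ S, (1:ℝ)/q := by
  classical
  by_contra hcon
  push_neg at hcon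
  apply hdiv
  apply summable_of_sum_le (c := C)
  · intro q
    positivity
  · intro u
    have himg : ∑ q ∈ u, (1:ℝ)/((q:ℕ):ℝ) = ∑ q ∈ u.image (fun q : Q => (q:ℕ)), (1:ℝ)/q := by
    
      rw [Finset.sum_image (fun a _ b _ h => Subtype.ext h)]
    rw [himg]
    have := hcon (u.image (fun q : Q => (q:ℕ))) (by
      intro q hq
      simp only [Finset.mem_image] at hq
      obtain ⟨a, _, rfl⟩ := hq
      exact a.2)
    linarith

lemma prod_bound (S : Finset ℕ) (hS : ∀ q ∈ S, Nat.Prime q) :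
    ((∏ q ∈ S, (q^2 - q + 1) : ℕ) : ℝ)
      ≤ Real.exp (-(1/2) * ∑ q ∈ S, (1:ℝ)/q) * ((∏ q ∈ S, q^2 : ℕ) : ℝ) := by
  push_cast
  have hexp : Real.exp (-(1/2) * ∑ q ∈ S, (1:ℝ)/q) = ∏ q ∈ S, Real.exp (-(1/(2*(q:ℝ)))) := by
    rw [← Real.exp_sum]
    congr 1
    rw [Finset.mul_sum]
    apply Finset.sum_congr rfl
    intro q hq
    field_simp
  rw [hexp, ← Finset.prod_mul_distrib]
  apply Finset.prod_le_prod
  · intro q hq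
    have h2 : (2:ℝ) ≤ q := by exact_mod_cast (hS q hq).two_le
    have : (q:ℝ) ≤ (q:ℝ)^2 := by nlinarith
    rw [Nat.cast_sub (by nlinarith [(hS q hq).two_le] : q ≤ q^2)]
    push_cast
    nlinarith
  · intro q hq
    have h2 : (2:ℝ) ≤ q := by exact_mod_cast (hS q hq).two_le
    rw [Nat.cast_sub (by nlinarith [(hS q hq).two_le] : q ≤ q^2)]
    push_cast
    have hle : 1 - 1/(2*(q:ℝ)) ≤ Real.exp (-(1/(2*q))) := by
      have := Real.add_one_le_exp (-(1/(2*(q:ℝ))))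
      linarith
    have hq2 : (0:ℝ) < (q:ℝ)^2 := by positivity
    have : (1 - 1/(2*(q:ℝ))) * (q:ℝ)^2 ≤ Real.exp (-(1/(2*q))) * (q:ℝ)^2 := by
      apply mul_le_mul_of_nonneg_right hle (le_of_lt hq2)
    have hid : (1 - 1/(2*(q:ℝ))) * (q:ℝ)^2 = (q:ℝ)^2 - q/2 := by
      field_simp
    nlinarith


lemma mc2_part (Q : Set ℕ) (hQ : ∀ q ∈ Q, Nat.Prime q) (n : ℕ) (hn : 0 < n) :
    ∃ a, (0 < a ∧ Squarefree a ∧ ∀ p : ℕ, p.Prime → p ∣ a → p ∈ Q) ∧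
      ∃ b, (0 < b ∧ ∀ q ∈ Q, q ∣ b → q^2 ∣ b) ∧ n = a * b := by
  classical
  set t : Finset ℕ := n.primeFactors.filter (fun p => p ∈ Q ∧ n.factorization p = 1) with ht
  have htp : ∀ p ∈ t, p.Prime := fun p hp =>
    Nat.prime_of_mem_primeFactors (Finset.mem_filter.1 hp).1
  set a : ℕ := ∏ p ∈ t, p with ha
  have hadvd : a ∣ n := by
    refine dvd_trans (Finset.prod_dvd_prod_of_subset _ _ _ (Finset.filter_subset _ _)) ?_
    exact Nat.prod_primeFactors_dvd n
  have hapos : 0 < a := Finset.prod_pos (fun p hp => (htp p hp).pos)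
  have hmem_of_dvd : ∀ q : ℕ, q.Prime → q ∣ a → q ∈ t := by
    intro q hq hdvd
    obtain ⟨p, hp, hqp⟩ := (hq.prime.dvd_finset_prod_iff _).1 hdvd
    rwa [((htp p hp).dvd_iff_eq hq.ne_one).1 hqp] at hp
  set b : ℕ := n / a with hb
  have hab : n = a * b := (Nat.mul_div_cancel' hadvd).symm
  have hbpos : 0 < b := by
    rcases Nat.eq_zero_or_pos b with h0 | h1
    · rw [h0, mul_zero] at hab; omega
    · exact h1
  refine ⟨a, ⟨hapos, sf_prod t htp, ?_⟩, b, ⟨hbpos, ?_⟩, hab⟩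
  · intro p hp hpa
    exact (Finset.mem_filter.1 (hmem_of_dvd p hp hpa)).2.1
  · intro q hqQ hqb
    have hq : q.Prime := hQ q hqQ
    by_cases hqt : q ∈ t
    · exfalso
      have hqa : q ∣ a := Finset.dvd_prod_of_mem _ hqt
      have : q^2 ∣ n := by
        rw [hab, sq]
        exact mul_dvd_mul hqa hqb
      have h2 : 2 ≤ n.factorization q :=
        (Nat.Prime.pow_dvd_iff_le_factorization hq (by omega)).1 this
      have := (Finset.mem_filter.1 hqt).2.2
      omega
    · have hqa : ¬ q ∣ a := fun hd => hqt (hmem_of_dvd q hq hd)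
      have hqn : q ∣ n := hqb.trans ⟨a, by rw [hab, mul_comm]⟩
      have hqpf : q ∈ n.primeFactors := Nat.mem_primeFactors.2 ⟨hq, hqn, by omega⟩
      have hf1 : n.factorization q ≠ 1 := by
        intro h1
        exact hqt (Finset.mem_filter.2 ⟨hqpf, hqQ, h1⟩)
      have hfge : 1 ≤ n.factorization q :=
        (Nat.Prime.pow_dvd_iff_le_factorization hq (by omega)).1 (by simpa using hqn)
      have h2 : q^2 ∣ n := (Nat.Prime.pow_dvd_iff_le_factorization hq (by omega)).2 (by omega)
      have hco : Nat.Coprime (q^2) a :=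
        Nat.Coprime.pow_left 2 ((Nat.Prime.coprime_iff_not_dvd hq).2 hqa)
      have : q^2 ∣ a * b := hab ▸ h2
      exact (Nat.Coprime.dvd_of_dvd_mul_left hco) this



end Stmt12Aux

open Stmt12Aux in
theorem stmt_12 (Q : Set ℕ) (hQ : ∀ q ∈ Q, Nat.Prime q)
    (hdiv : ¬ Summable (fun q : Q => (1 : ℝ) / ((q : ℕ) : ℝ)))
    (A : Set ℕ)
    (hA : A = {n : ℕ | 0 < n ∧ Squarefree n ∧ ∀ p : ℕ, p.Prime → p ∣ n → p ∈ Q}) :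
    ∃ B : Set ℕ, MC2 A B ∧
      (fun x : ℕ => (cnt B x : ℝ)) =o[Filter.atTop] (fun x : ℕ => (x : ℝ)) := by
  classical
  refine ⟨{b : ℕ | 0 < b ∧ ∀ q ∈ Q, q ∣ b → q^2 ∣ b}, ⟨?_, ?_, ?_⟩, ?_⟩
  · rw [hA]; intro n hn; exact hn.1
  · intro b hb; exact hb.1
  · intro n hn
    obtain ⟨a, haprop, b, hbprop, hab⟩ := mc2_part Q hQ n hn
    exact ⟨a, by rw [hA]; exact haprop, b, hbprop, hab⟩
  · rw [Asymptotics.isLittleO_iff]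
    intro c hc
    obtain ⟨S, hSQ, hsum⟩ := choose_S Q hdiv (2 * Real.log (2/c))
    have hSp : ∀ q ∈ S, Nat.Prime q := fun q hq => hQ q (hSQ q hq)
    set M : ℕ := ∏ q ∈ S, q^2 with hM
    set G : ℕ := ∏ q ∈ S, (q^2 - q + 1) with hG
    have hMpos : 0 < M := Finset.prod_pos (fun q hq => pow_pos (hSp q hq).pos 2)
    have hGM : (G : ℝ) ≤ (c/2) * M := by
      have h1 := prod_bound S hSp
      have h2 : Real.exp (-(1/2) * ∑ q ∈ S, (1:ℝ)/q) ≤ c/2 := by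
        have hle : Real.exp (-(1/2) * ∑ q ∈ S, (1:ℝ)/q) ≤ Real.exp (- Real.log (2/c)) := by
          apply Real.exp_le_exp.2
          nlinarith
        have : Real.exp (- Real.log (2/c)) = c/2 := by
          rw [Real.exp_neg, Real.exp_log (by positivity), inv_div]
        linarith
      calc (G : ℝ) ≤ Real.exp (-(1/2) * ∑ q ∈ S, (1:ℝ)/q) * M := h1
        _ ≤ (c/2) * M := by
            apply mul_le_mul_of_nonneg_right h2 (by positivity)
    have hcount : ∀ x : ℕ, (cnt {b : ℕ | 0 < b ∧ ∀ q ∈ Q, q ∣ b → q^2 ∣ b} x : ℝ)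
        ≤ ((x / M + 1 : ℕ) : ℝ) * (G : ℝ) := by
      intro x
      have hsub : {b ∈ {b : ℕ | 0 < b ∧ ∀ q ∈ Q, q ∣ b → q^2 ∣ b} | b ≤ x} ⊆
          ↑((Finset.range (x+1)).filter (fun b => ∀ q ∈ S, q ∣ b → q^2 ∣ b)) := by
        intro b hb
        obtain ⟨⟨hbpos, hbQ⟩, hbx⟩ := hb
        simp only [Finset.coe_filter, Set.mem_setOf_eq, Finset.mem_range]
        exact ⟨by omega, fun q hq hd => hbQ q (hSQ q hq) hd⟩
      have h1 : cnt {b : ℕ | 0 < b ∧ ∀ q ∈ Q, q ∣ b → q^2 ∣ b} x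
          ≤ ((Finset.range (x+1)).filter (fun b => ∀ q ∈ S, q ∣ b → q^2 ∣ b)).card := by
        rw [cnt, ← Set.ncard_coe_finset]
        exact Set.ncard_le_ncard hsub (Finset.finite_toSet _)
      have h2 := count_bound S hSp x (crt_count S hSp)
      have : cnt {b : ℕ | 0 < b ∧ ∀ q ∈ Q, q ∣ b → q^2 ∣ b} x ≤ (x / M + 1) * G :=
        le_trans h1 h2
      exact_mod_cast this
    rw [Filter.eventually_atTop]
    refine ⟨⌈2*(G:ℝ)/c⌉₊ + 1, ?_⟩
    intro x hx
    have hxG : (G:ℝ) ≤ (c/2) * x := by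
      have hx1 : (⌈2*(G:ℝ)/c⌉₊ : ℝ) ≤ x := by
        have : (⌈2*(G:ℝ)/c⌉₊ + 1 : ℕ) ≤ x := hx
        exact_mod_cast le_trans (by omega : ⌈2*(G:ℝ)/c⌉₊ ≤ ⌈2*(G:ℝ)/c⌉₊ + 1) this
      have hx2 : 2*(G:ℝ)/c ≤ x := le_trans (Nat.le_ceil _) hx1
      rw [div_le_iff₀ hc] at hx2
      nlinarith
    have hxnn : (0:ℝ) ≤ x := Nat.cast_nonneg x
    have key : (cnt {b : ℕ | 0 < b ∧ ∀ q ∈ Q, q ∣ b → q^2 ∣ b} x : ℝ) ≤ c * x := by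
      have h1 := hcount x
      have h2 : ((x / M + 1 : ℕ) : ℝ) * (G : ℝ) ≤ ((x:ℝ)/M + 1) * G := by
        apply mul_le_mul_of_nonneg_right _ (Nat.cast_nonneg G)
        push_cast
        have := Nat.cast_div_le (α := ℝ) (m := x) (n := M)
        linarith
      have h3 : ((x:ℝ)/M + 1) * G = ((x:ℝ)/M) * G + G := by ring
      have h4 : ((x:ℝ)/M) * G ≤ ((x:ℝ)/M) * ((c/2) * M) :=
        mul_le_mul_of_nonneg_left hGM (by positivity)
      have h5 : ((x:ℝ)/M) * ((c/2) * M) = (c/2) * x := by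
        have hMne : (M:ℝ) ≠ 0 := by positivity
        field_simp
      nlinarith
    have hnorm1 : ‖(cnt {b : ℕ | 0 < b ∧ ∀ q ∈ Q, q ∣ b → q^2 ∣ b} x : ℝ)‖
        = (cnt {b : ℕ | 0 < b ∧ ∀ q ∈ Q, q ∣ b → q^2 ∣ b} x : ℝ) :=
      Real.norm_of_nonneg (Nat.cast_nonneg _)
    have hnorm2 : ‖(x:ℝ)‖ = (x:ℝ) := Real.norm_of_nonneg hxnn
    rw [hnorm1, hnorm2]
    exact key
end

section
/- Let (A,B) ∈ MC₂ be an infinite pair of multiplicative complements with A(x) = o(x). Then there exist infinitely many positive integers x such that B(x) > √x. -/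
open Filter

open Classical in
noncomputable def fsAux (A : Set ℕ) (x : ℕ) : Finset ℕ :=
  (Finset.Icc 1 x).filter (· ∈ A)

lemma mem_fsAux {A : Set ℕ} {x a : ℕ} : a ∈ fsAux A x ↔ a ∈ A ∧ 1 ≤ a ∧ a ≤ x := by
  classical
  simp only [fsAux, Finset.mem_filter, Finset.mem_Icc]
  tauto

lemma fsAux_mono {A : Set ℕ} {x y : ℕ} (h : x ≤ y) : fsAux A x ⊆ fsAux A y := by
  intro a ha
  rw [mem_fsAux] at ha ⊢
  exact ⟨ha.1, ha.2.1, ha.2.2.trans h⟩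

lemma cnt_eq_card {A : Set ℕ} (hA : A ⊆ {n | 0 < n}) (x : ℕ) :
    cnt A x = (fsAux A x).card := by
  have hset : {a ∈ A | a ≤ x} = ↑(fsAux A x) := by
    ext a
    simp only [Set.mem_setOf_eq, Finset.coe_sort_coe, Finset.mem_coe, mem_fsAux]
    constructor
    · rintro ⟨ha, hle⟩; exact ⟨ha, hA ha, hle⟩
    · rintro ⟨ha, _, hle⟩; exact ⟨ha, hle⟩
  rw [cnt, hset, Set.ncard_coe_finset]

lemma cnt_strictMonoOn {B : Set ℕ} (hB : B ⊆ {n | 0 < n}) {b b' : ℕ}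
    (hb' : b' ∈ B) (h : b < b') : cnt B b < cnt B b' := by
  rw [cnt_eq_card hB, cnt_eq_card hB]
  apply Finset.card_lt_card
  constructor
  · exact fsAux_mono h.le
  · intro hsub
    have : b' ∈ fsAux B b := hsub (mem_fsAux.mpr ⟨hb', hB hb', le_refl _⟩)
    rw [mem_fsAux] at this
    omega

lemma one_le_cnt {B : Set ℕ} (hB : B ⊆ {n | 0 < n}) {b : ℕ} (hb : b ∈ B) :
    1 ≤ cnt B b := by
  rw [cnt_eq_card hB]
  exact Finset.card_pos.mpr ⟨b, mem_fsAux.mpr ⟨hb, hB hb, le_refl _⟩⟩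

lemma cnt_mono {B : Set ℕ} (hB : B ⊆ {n | 0 < n}) {x y : ℕ} (h : x ≤ y) :
    cnt B x ≤ cnt B y := by
  rw [cnt_eq_card hB, cnt_eq_card hB]
  exact Finset.card_le_card (fsAux_mono h)

/-- The basic counting inequality : every `n ≤ x` factors as `a*b`. -/
lemma count_ineq {A B : Set ℕ} (hAB : MC2 A B) (x : ℕ) :
    x ≤ ∑ b ∈ fsAux B x, (fsAux A (x / b)).card := by
  obtain ⟨hApos, hBpos, hcov⟩ := hAB
  have hex : ∀ n : ℕ, ∃ p : ℕ × ℕ, 0 < n → p.1 ∈ A ∧ p.2 ∈ B ∧ n = p.1 * p.2 := by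
    intro n
    by_cases h : 0 < n
    · obtain ⟨a, ha, b, hb, hab⟩ := hcov n h
      exact ⟨(a, b), fun _ => ⟨ha, hb, hab⟩⟩
    · exact ⟨(1, 1), fun h' => absurd h' h⟩
  choose f hf using hex
  have hcard : (Finset.Icc 1 x).card ≤ ((fsAux B x).sigma (fun b => fsAux A (x / b))).card := by
    apply Finset.card_le_card_of_injOn (fun n => ⟨(f n).2, (f n).1⟩)
    · intro n hn
      rw [Finset.mem_coe, Finset.mem_Icc] at hn
      obtain ⟨ha, hb, hab⟩ := hf n hn.1
      have hbpos : 0 < (f n).2 := hBpos hb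
      have hapos : 0 < (f n).1 := hApos ha
      have hble : (f n).2 ≤ x := by
        calc (f n).2 ≤ (f n).1 * (f n).2 := Nat.le_mul_of_pos_left _ hapos
        _ = n := hab.symm
        _ ≤ x := hn.2
      refine Finset.mem_sigma.mpr ⟨mem_fsAux.mpr ⟨hb, hbpos, hble⟩,
        mem_fsAux.mpr ⟨ha, hapos, ?_⟩⟩
      rw [Nat.le_div_iff_mul_le hbpos, ← hab]
      exact hn.2
    · intro m hm n hn hmn
      simp only [Finset.coe_Icc, Set.mem_Icc] at hm hn
      obtain ⟨_, _, habm⟩ := hf m hm.1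
      obtain ⟨_, _, habn⟩ := hf n hn.1
      have h1 : (f m).2 = (f n).2 := congrArg Sigma.fst hmn
      have h2 : (f m).1 = (f n).1 := by
        rw [Sigma.ext_iff] at hmn
        exact eq_of_heq hmn.2
      rw [habm, habn, h1, h2]
  calc x = (Finset.Icc 1 x).card := by simp
  _ ≤ _ := hcard
  _ = _ := Finset.card_sigma _ _

lemma basel (M : ℕ) : ∑ k ∈ Finset.Icc 1 M, (1 / (k : ℝ) ^ 2) ≤ 2 := by
  have key : ∀ m : ℕ, 1 ≤ m → ∑ k ∈ Finset.Icc 1 m, (1 / (k : ℝ) ^ 2) ≤ 2 - 1 / (m : ℝ) := by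
    intro m hm
    induction m with
    | zero => omega
    | succ n ih =>
      rcases Nat.lt_or_ge 1 (n + 1) with h | h
      · have hn : 1 ≤ n := by omega
        have hstep := ih hn
        rw [Finset.sum_Icc_succ_top (by omega : 1 ≤ n + 1)]
        have hn1 : (1 : ℝ) ≤ (n : ℝ) := by exact_mod_cast hn
        have h1 : 1 / ((n : ℝ) + 1) ^ 2 ≤ 1 / (n : ℝ) - 1 / ((n : ℝ) + 1) := by
          have heq : 1 / (n : ℝ) - 1 / ((n : ℝ) + 1) = 1 / ((n : ℝ) * ((n : ℝ) + 1)) := by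
            field_simp
            ring
          rw [heq]
          apply one_div_le_one_div_of_le
          · positivity
          · nlinarith
        push_cast
        linarith
      · have : n = 0 := by omega
        subst this
        rw [show (0:ℕ)+1 = 1 from rfl, Finset.Icc_self, Finset.sum_singleton]
        norm_num
  rcases Nat.eq_zero_or_pos M with h | h
  · subst h; simp
  · have hM := key M h
    have : (0 : ℝ) < 1 / (M : ℝ) := by
      have : (0:ℝ) < (M:ℝ) := by exact_mod_cast h
      positivity
    linarith

/-- The harmonic-type bound: if `cnt B y ≤ √y` for all `y > X₀`, the sum of
reciprocals of elements of `B` up to `x` is bounded by `X₀ + 2`. -/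
lemma harmonic_bound {B : Set ℕ} (hBpos : B ⊆ {n | 0 < n}) (X₀ x : ℕ)
    (hsq : ∀ y : ℕ, X₀ < y → (cnt B y : ℝ) ≤ Real.sqrt y) :
    ∑ b ∈ fsAux B x, (1 / (b : ℝ)) ≤ (X₀ : ℝ) + 2 := by
  classical
  rw [← Finset.sum_filter_add_sum_filter_not (fsAux B x) (fun b => b ≤ X₀)]
  have h1 : ∑ b ∈ (fsAux B x).filter (fun b => b ≤ X₀), (1 / (b : ℝ)) ≤ (X₀ : ℝ) := by
    calc ∑ b ∈ (fsAux B x).filter (fun b => b ≤ X₀), (1 / (b : ℝ))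
        ≤ ∑ _b ∈ (fsAux B x).filter (fun b => b ≤ X₀), (1 : ℝ) := by
          apply Finset.sum_le_sum
          intro b hb
          rw [Finset.mem_filter, mem_fsAux] at hb
          have : (1 : ℝ) ≤ (b : ℝ) := by exact_mod_cast hb.1.2.1
          rw [div_le_one (by linarith)]
          exact this
    _ = ((fsAux B x).filter (fun b => b ≤ X₀)).card := by simp
    _ ≤ ((Finset.Icc 1 X₀).card : ℝ) := by
          have hsub : (fsAux B x).filter (fun b => b ≤ X₀) ⊆ Finset.Icc 1 X₀ := by
            intro b hb
            rw [Finset.mem_filter, mem_fsAux] at hb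
            rw [Finset.mem_Icc]
            exact ⟨hb.1.2.1, hb.2⟩
          exact_mod_cast Finset.card_le_card hsub
    _ = (X₀ : ℝ) := by simp
  have h2 : ∑ b ∈ (fsAux B x).filter (fun b => ¬ b ≤ X₀), (1 / (b : ℝ)) ≤ 2 := by
    set T := (fsAux B x).filter (fun b => ¬ b ≤ X₀) with hT
    have hmemT : ∀ b ∈ T, b ∈ B ∧ X₀ < b ∧ b ≤ x := by
      intro b hb
      rw [hT, Finset.mem_filter, mem_fsAux] at hb
      exact ⟨hb.1.1, by omega, hb.1.2.2⟩
    have hsqle : ∀ b ∈ T, 1 / (b : ℝ) ≤ 1 / (cnt B b : ℝ) ^ 2 := by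
      intro b hb
      obtain ⟨hbB, hbX, _⟩ := hmemT b hb
      have hs := hsq b hbX
      have hcnt1 : 1 ≤ cnt B b := one_le_cnt hBpos hbB
      have hcpos : (0 : ℝ) < (cnt B b : ℝ) := by exact_mod_cast hcnt1
      have hsq2 : (cnt B b : ℝ) ^ 2 ≤ (b : ℝ) := by
        nlinarith [Real.sq_sqrt (by positivity : (0:ℝ) ≤ (b:ℝ)), Real.sqrt_nonneg (b:ℝ), hs,
          hcpos]
      apply one_div_le_one_div_of_le
      · positivity
      · exact hsq2
    have hinj : Set.InjOn (cnt B) ↑T := by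
      intro b hb b' hb' heq
      by_contra hne
      rcases Nat.lt_or_ge b b' with h | h
      · have := cnt_strictMonoOn hBpos (hmemT b' (by exact_mod_cast hb')).1 h
        omega
      · have h' : b' < b := by omega
        have := cnt_strictMonoOn hBpos (hmemT b (by exact_mod_cast hb)).1 h'
        omega
    calc ∑ b ∈ T, (1 / (b : ℝ)) ≤ ∑ b ∈ T, 1 / (cnt B b : ℝ) ^ 2 :=
          Finset.sum_le_sum hsqle
    _ = ∑ k ∈ T.image (cnt B), 1 / (k : ℝ) ^ 2 :=
          (Finset.sum_image (g := cnt B) (f := fun k : ℕ => 1 / (k : ℝ) ^ 2)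
            (fun b hb b' hb' h => hinj (by exact_mod_cast hb) (by exact_mod_cast hb') h)).symm
    _ ≤ ∑ k ∈ Finset.Icc 1 (cnt B x), 1 / (k : ℝ) ^ 2 := by
          apply Finset.sum_le_sum_of_subset_of_nonneg
          · intro k hk
            rw [Finset.mem_image] at hk
            obtain ⟨b, hb, rfl⟩ := hk
            obtain ⟨hbB, _, hbx⟩ := hmemT b hb
            rw [Finset.mem_Icc]
            exact ⟨one_le_cnt hBpos hbB, cnt_mono hBpos hbx⟩
          · intro k _ _
            positivity
    _ ≤ 2 := basel _
  linarith

theorem stmt_15 (A B : Set ℕ) (hAB : MC2 A B) (hA : A.Infinite) (hB : B.Infinite)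
    (ho : (fun x : ℕ => (cnt A x : ℝ)) =o[Filter.atTop] (fun x : ℕ => (x : ℝ))) :
    {x : ℕ | 0 < x ∧ Real.sqrt x < (cnt B x : ℝ)}.Infinite := by
  classical
  obtain ⟨hApos, hBpos, hcov⟩ := id hAB
  by_contra hfin
  rw [Set.not_infinite] at hfin
  -- get X₀ bounding the finite exceptional set
  obtain ⟨X₀, hX₀⟩ := hfin.bddAbove
  have hsq : ∀ y : ℕ, X₀ < y → (cnt B y : ℝ) ≤ Real.sqrt y := by
    intro y hy
    by_contra hlt
    push_neg at hlt
    have : y ∈ {x : ℕ | 0 < x ∧ Real.sqrt x < (cnt B x : ℝ)} := ⟨by omega, hlt⟩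
    exact absurd (hX₀ this) (by omega)
  set C : ℝ := (X₀ : ℝ) + 2 with hC
  have hCpos : (0 : ℝ) < C := by positivity
  set ε : ℝ := 1 / (2 * C) with hε
  have hεpos : (0 : ℝ) < ε := by positivity
  have hev := ho.def hεpos
  rw [eventually_atTop] at hev
  obtain ⟨N, hN⟩ := hev
  have hN' : ∀ y : ℕ, N ≤ y → (cnt A y : ℝ) ≤ ε * y := by
    intro y hy
    have := hN y hy
    rwa [Real.norm_natCast, Real.norm_natCast] at this
  -- the contradiction point
  set x : ℕ := max (X₀ + 1) (4 * N ^ 2 + 1) with hx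
  have hxX₀ : X₀ < x := by omega
  have hx1 : 1 ≤ x := by omega
  have hxN : 4 * N ^ 2 < x := by omega
  -- main chain
  have hmain : (x : ℝ) ≤ ∑ b ∈ fsAux B x, ((fsAux A (x / b)).card : ℝ) := by
    have := count_ineq hAB x
    exact_mod_cast this
  have hterm : ∀ b ∈ fsAux B x, ((fsAux A (x / b)).card : ℝ) ≤ ε * x / b + N := by
    intro b hb
    rw [mem_fsAux] at hb
    have hb1 : 1 ≤ b := hb.2.1
    have hbR : (1 : ℝ) ≤ (b : ℝ) := by exact_mod_cast hb1
    have hcnteq : ((fsAux A (x / b)).card : ℝ) = (cnt A (x / b) : ℝ) := by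
      rw [cnt_eq_card hApos]
    rcases Nat.lt_or_ge (x / b) N with h | h
    · -- small quotient: card ≤ x / b < N
      have hcard : (fsAux A (x / b)).card ≤ x / b := by
        calc (fsAux A (x / b)).card ≤ (Finset.Icc 1 (x / b)).card :=
              Finset.card_le_card (Finset.filter_subset _ _)
        _ = x / b := by simp
      have : ((fsAux A (x / b)).card : ℝ) ≤ (N : ℝ) := by
        have : (fsAux A (x / b)).card ≤ N := by omega
        exact_mod_cast this
      have hnn : (0 : ℝ) ≤ ε * x / b := by positivity
      linarith
    · -- large quotient: use the o-bound
      have hbound := hN' (x / b) h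
      have hcast : ((x / b : ℕ) : ℝ) ≤ (x : ℝ) / (b : ℝ) := Nat.cast_div_le
      have : (cnt A (x / b) : ℝ) ≤ ε * ((x : ℝ) / b) := by
        calc (cnt A (x / b) : ℝ) ≤ ε * ((x / b : ℕ) : ℝ) := hbound
        _ ≤ ε * ((x : ℝ) / b) := by
              apply mul_le_mul_of_nonneg_left hcast hεpos.le
      rw [hcnteq]
      have hNnn : (0 : ℝ) ≤ (N : ℝ) := Nat.cast_nonneg _
      calc (cnt A (x / b) : ℝ) ≤ ε * ((x : ℝ) / b) := this
      _ = ε * x / b := by ring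
      _ ≤ ε * x / b + N := by linarith
  have hsum2 : ∑ b ∈ fsAux B x, ((fsAux A (x / b)).card : ℝ)
      ≤ ε * x * (∑ b ∈ fsAux B x, 1 / (b : ℝ)) + N * (cnt B x : ℝ) := by
    calc ∑ b ∈ fsAux B x, ((fsAux A (x / b)).card : ℝ)
        ≤ ∑ b ∈ fsAux B x, (ε * x / b + N) := Finset.sum_le_sum hterm
    _ = ∑ b ∈ fsAux B x, (ε * x * (1 / (b : ℝ))) + ∑ _b ∈ fsAux B x, (N : ℝ) := by
          rw [← Finset.sum_add_distrib]
          apply Finset.sum_congr rfl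
          intro b _
          ring
    _ = ε * x * (∑ b ∈ fsAux B x, 1 / (b : ℝ)) + N * (cnt B x : ℝ) := by
          rw [← Finset.mul_sum, Finset.sum_const, nsmul_eq_mul,
            cnt_eq_card hBpos]
          ring
  have hharm := harmonic_bound hBpos X₀ x hsq
  have hBx : (cnt B x : ℝ) ≤ Real.sqrt x := hsq x hxX₀
  have hsqrtnn : (0 : ℝ) ≤ Real.sqrt x := Real.sqrt_nonneg _
  have hεxnn : (0 : ℝ) ≤ ε * x := by positivity
  have hNnn : (0 : ℝ) ≤ (N : ℝ) := Nat.cast_nonneg _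
  have hfinal : (x : ℝ) ≤ ε * x * C + N * Real.sqrt x := by
    calc (x : ℝ) ≤ ε * x * (∑ b ∈ fsAux B x, 1 / (b : ℝ)) + N * (cnt B x : ℝ) :=
          le_trans hmain hsum2
    _ ≤ ε * x * C + N * Real.sqrt x := by
          apply add_le_add
          · exact mul_le_mul_of_nonneg_left hharm hεxnn
          · exact mul_le_mul_of_nonneg_left hBx hNnn
  have hεC : ε * C = 1 / 2 := by
    rw [hε]
    field_simp
  have hx2 : (x : ℝ) / 2 ≤ N * Real.sqrt x := by
    have : ε * x * C = x * (ε * C) := by ring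
    rw [this, hεC] at hfinal
    linarith
  -- x = (√x)², so √x ≤ 2N
  have hsqx : Real.sqrt x * Real.sqrt x = (x : ℝ) :=
    Real.mul_self_sqrt (by positivity)
  have hsqpos : 0 < Real.sqrt x := by
    apply Real.sqrt_pos.mpr
    exact_mod_cast hx1
  have hsqle : Real.sqrt x ≤ 2 * N := by
    nlinarith
  have hxle : (x : ℝ) ≤ 4 * N ^ 2 := by
    nlinarith
  have : ¬ ((x : ℝ) ≤ 4 * (N : ℝ) ^ 2) := by
    push_neg
    exact_mod_cast hxN
  exact this hxle
end

section
/- Let (A,B) ∈ MC₂ be a pair of multiplicative complements with |B| = k finite. Then liminf_{x→∞} A(x)/x ≥ ∏_{i=1}^{k} (1 − 1/pᵢ), where pᵢ denotes the i-th smallest prime number. -/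
open Filter

/-- number of `n ∈ [1,N]` divisible by no element of `D`. -/
def gcount (D : Finset ℕ) (N : ℕ) : ℕ :=
  ((Finset.Icc 1 N).filter (fun n => ∀ b ∈ D, ¬ b ∣ n)).card

lemma gcount_empty (N : ℕ) : gcount ∅ N = N := by
  simp [gcount]

lemma gcount_mono (D : Finset ℕ) {N M : ℕ} (h : N ≤ M) : gcount D N ≤ gcount D M := by
  apply Finset.card_le_card
  exact Finset.filter_subset_filter _ (Finset.Icc_subset_Icc_right h)

lemma gcount_add (D : Finset ℕ) {L : ℕ} (hL : ∀ b ∈ D, b ∣ L) (N : ℕ) :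
    gcount D (L + N) = gcount D L + gcount D N := by
  classical
  unfold gcount
  have hsplit : Finset.Icc 1 (L + N) = Finset.Icc 1 L ∪ Finset.Icc (L+1) (L+N) := by
    apply Finset.ext
    intro n
    simp only [Finset.mem_Icc, Finset.mem_union]
    omega
  rw [hsplit, Finset.filter_union, Finset.card_union_of_disjoint]
  · congr 1
    apply Finset.card_bij' (fun n _ => n - L) (fun n _ => n + L)
    · intro a ha
      simp only [Finset.mem_filter, Finset.mem_Icc] at ha ⊢
      refine ⟨by omega, fun b hb hdvd => ?_⟩
      have : b ∣ a := by
        have h' : a = (a - L) + L := by omega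
        rw [h']; exact Nat.dvd_add hdvd (hL b hb)
      exact ha.2 b hb this
    · intro a ha
      simp only [Finset.mem_filter, Finset.mem_Icc] at ha ⊢
      refine ⟨by omega, fun b hb hdvd => ?_⟩
      have : b ∣ a := by
        have h' := Nat.dvd_sub hdvd (hL b hb)
        simpa using h'
      exact ha.2 b hb this
    · intro a ha
      simp only [Finset.mem_filter, Finset.mem_Icc] at ha
      omega
    · intro a ha; omega
  · apply Finset.disjoint_filter_filter
    rw [Finset.disjoint_left]
    intro n h1 h2
    simp only [Finset.mem_Icc] at h1 h2
    omega

lemma gcount_mul (D : Finset ℕ) {L : ℕ} (hL : ∀ b ∈ D, b ∣ L) (m : ℕ) :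
    gcount D (m * L) = m * gcount D L := by
  induction m with
  | zero => simp [gcount]
  | succ n ih =>
      have h : (n+1) * L = L + n * L := by ring
      rw [h, gcount_add D hL, ih]; ring

lemma gcount_p_recursion (D : Finset ℕ) {p : ℕ} (hp : p.Prime)
    (hD : ∀ b ∈ D, ¬ p ∣ b) (N : ℕ) :
    ((Finset.Icc 1 N).filter (fun n => p ∣ n ∧ ∀ b ∈ D, ¬ b ∣ n)).card = gcount D (N / p) := by
  classical
  apply Finset.card_bij' (fun n _ => n / p) (fun m _ => p * m)
  · intro a ha
    simp only [Finset.mem_filter, Finset.mem_Icc] at ha ⊢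
    obtain ⟨⟨h1, h2⟩, hpa, havoid⟩ := ha
    have hap : a = p * (a / p) := (Nat.mul_div_cancel' hpa).symm
    refine ⟨⟨?_, ?_⟩, fun b hb hdvd => ?_⟩
    · rcases Nat.eq_zero_or_pos (a / p) with h | h
      · rw [h, Nat.mul_zero] at hap; omega
      · omega
    · exact (Nat.le_div_iff_mul_le hp.pos).mpr (by rw [Nat.div_mul_cancel hpa]; exact h2)
    · refine havoid b hb ?_
      rw [hap]; exact hdvd.mul_left p
  · intro m hm
    simp only [Finset.mem_filter, Finset.mem_Icc] at hm ⊢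
    obtain ⟨⟨h1, h2⟩, havoid⟩ := hm
    refine ⟨⟨Nat.one_le_iff_ne_zero.mpr (Nat.mul_ne_zero hp.pos.ne' (by omega)), ?_⟩,
      Dvd.intro m rfl, fun b hb hdvd => ?_⟩
    · rw [mul_comm]; exact (Nat.le_div_iff_mul_le hp.pos).mp h2
    · have hcop : Nat.Coprime b p := (Nat.Prime.coprime_iff_not_dvd hp |>.mpr (hD b hb)).symm
      exact havoid b hb (hcop.dvd_of_dvd_mul_left hdvd)
  · intro a ha
    simp only [Finset.mem_filter, Finset.mem_Icc] at ha
    exact Nat.mul_div_cancel' ha.2.1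
  · intro m hm
    exact Nat.mul_div_cancel_left m hp.pos

noncomputable def pf (i : ℕ) : ℝ := 1 - 1 / ((Nat.nth Nat.Prime i : ℕ) : ℝ)

lemma pf_pos (i : ℕ) : 0 < pf i := by
  have h2 : 2 ≤ Nat.nth Nat.Prime i := (Nat.prime_nth_prime i).two_le
  have : (1:ℝ)/((Nat.nth Nat.Prime i : ℕ):ℝ) < 1 := by
    rw [div_lt_one (by exact_mod_cast lt_of_lt_of_le zero_lt_two h2)]
    exact_mod_cast lt_of_lt_of_le one_lt_two h2
  unfold pf; linarith

lemma pf_le_one (i : ℕ) : pf i ≤ 1 := by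
  have h2 : 2 ≤ Nat.nth Nat.Prime i := (Nat.prime_nth_prime i).two_le
  have : (0:ℝ) ≤ 1/((Nat.nth Nat.Prime i : ℕ):ℝ) := by positivity
  unfold pf; linarith

lemma pf_mono {i i' : ℕ} (h : i ≤ i') : pf i ≤ pf i' := by
  have hle : Nat.nth Nat.Prime i ≤ Nat.nth Nat.Prime i' :=
    (Nat.nth_le_nth Nat.infinite_setOf_prime).mpr h
  have h2 : 2 ≤ Nat.nth Nat.Prime i := (Nat.prime_nth_prime i).two_le
  have hd : (1:ℝ)/((Nat.nth Nat.Prime i' : ℕ):ℝ) ≤ 1/((Nat.nth Nat.Prime i : ℕ):ℝ) := by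
    apply one_div_le_one_div_of_le
    · exact_mod_cast lt_of_lt_of_le zero_lt_two h2
    · exact_mod_cast hle
  unfold pf; linarith

lemma main_density (m : ℕ) : ∀ D : Finset ℕ, D.card = m → ∀ j : ℕ,
    (∀ b ∈ D, 2 ≤ b) → (∀ b ∈ D, ∀ i < j, ¬ (Nat.nth Nat.Prime i) ∣ b) →
    ∀ L : ℕ, (∀ b ∈ D, b ∣ L) →
    (∏ i ∈ Finset.range m, pf (j + i)) * (L : ℝ) ≤ (gcount D L : ℝ) := by
  classical
  induction m using Nat.strong_induction_on with
  | _ m ih =>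
  intro D hcard j hD2 hDj L hL
  rcases Nat.eq_zero_or_pos m with hm | hm
  · subst hm
    rw [Finset.card_eq_zero] at hcard
    subst hcard
    simp [gcount_empty]
  have hDne : D.Nonempty := Finset.card_pos.mp (hcard ▸ hm)
  have hPne : (D.image Nat.minFac).Nonempty := hDne.image _
  set p := (D.image Nat.minFac).min' hPne with hpdef
  obtain ⟨b₀, hb₀D, hb₀⟩ := Finset.mem_image.mp ((D.image Nat.minFac).min'_mem hPne)
  have hb₀2 : 2 ≤ b₀ := hD2 b₀ hb₀D
  have hpp : p.Prime := by rw [hpdef, ← hb₀]; exact Nat.minFac_prime (by omega)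
  have hpb₀ : p ∣ b₀ := by rw [hpdef, ← hb₀]; exact Nat.minFac_dvd b₀
  set s := Nat.count Nat.Prime p with hsdef
  have hsp : Nat.nth Nat.Prime s = p := Nat.nth_count hpp
  have hjs : j ≤ s := by
    by_contra h
    push_neg at h
    exact hDj b₀ hb₀D s h (hsp ▸ hpb₀)
  set D' := D.filter (fun b => ¬ p ∣ b) with hD'def
  set m' := D'.card with hm'def
  have hD'sub : D' ⊆ D := Finset.filter_subset _ _
  have hb₀notin : b₀ ∉ D' := by
    simp only [hD'def, Finset.mem_filter]
    tauto
  have hm' : m' < m := by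
    rw [← hcard]
    exact Finset.card_lt_card ((Finset.ssubset_iff_of_subset hD'sub).mpr ⟨b₀, hb₀D, hb₀notin⟩)
  have hminle : ∀ b ∈ D, p ≤ b.minFac := by
    intro b hb
    exact (D.image Nat.minFac).min'_le _ (Finset.mem_image_of_mem _ hb)
  have hD'2 : ∀ b ∈ D', 2 ≤ b := fun b hb => hD2 b (hD'sub hb)
  have hD'j : ∀ b ∈ D', ∀ i < s + 1, ¬ (Nat.nth Nat.Prime i) ∣ b := by
    intro b hb i hi hdvd
    obtain ⟨hbD, hpb⟩ := Finset.mem_filter.mp hb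
    have hqp : Nat.nth Nat.Prime i ≤ p := by
      rw [← hsp]
      exact (Nat.nth_le_nth Nat.infinite_setOf_prime).mpr (by omega)
    have hle : b.minFac ≤ Nat.nth Nat.Prime i :=
      Nat.minFac_le_of_dvd (Nat.prime_nth_prime i).two_le hdvd
    have heq : Nat.nth Nat.Prime i = p := le_antisymm hqp (le_trans (hminle b hbD) hle)
    exact hpb (heq ▸ hdvd)
  have hpL : p ∣ L := hpb₀.trans (hL b₀ hb₀D)
  set L' := L / p with hL'def
  have hLpL : L = p * L' := (Nat.mul_div_cancel' hpL).symm
  have hL' : ∀ b ∈ D', b ∣ L' := by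
    intro b hb
    obtain ⟨hbD, hpb⟩ := Finset.mem_filter.mp hb
    have hcop : Nat.Coprime b p := ((hpp.coprime_iff_not_dvd).mpr hpb).symm
    exact hcop.dvd_of_dvd_mul_left (hLpL ▸ hL b hbD)
  -- counting
  have hDnp : ∀ b ∈ D', ¬ p ∣ b := fun b hb => (Finset.mem_filter.mp hb).2
  have hrec := gcount_p_recursion D' hpp hDnp L
  rw [← hL'def] at hrec
  have hsplitcard :
      ((Finset.Icc 1 L).filter (fun n => p ∣ n ∧ ∀ b ∈ D', ¬ b ∣ n)).card
      + ((Finset.Icc 1 L).filter (fun n => ¬ p ∣ n ∧ ∀ b ∈ D', ¬ b ∣ n)).card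
      = gcount D' L := by
    unfold gcount
    rw [← Finset.card_filter_add_card_filter_not
      (s := (Finset.Icc 1 L).filter (fun n => ∀ b ∈ D', ¬ b ∣ n)) (p := fun n => p ∣ n)]
    congr 1
    · rw [Finset.filter_filter]
      congr 1
      apply Finset.filter_congr
      intro n _
      constructor <;> (intro h; tauto)
    · rw [Finset.filter_filter]
      congr 1
      apply Finset.filter_congr
      intro n _
      constructor <;> (intro h; tauto)
  have hmulL : gcount D' L = p * gcount D' L' := by
    rw [hLpL]; exact gcount_mul D' hL' p
  have hcard2 : ((Finset.Icc 1 L).filter (fun n => ¬ p ∣ n ∧ ∀ b ∈ D', ¬ b ∣ n)).card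
      = p * gcount D' L' - gcount D' L' := by
    rw [← hmulL]
    omega
  have hsubset : (Finset.Icc 1 L).filter (fun n => ¬ p ∣ n ∧ ∀ b ∈ D', ¬ b ∣ n)
      ⊆ (Finset.Icc 1 L).filter (fun n => ∀ b ∈ D, ¬ b ∣ n) := by
    intro n hn
    simp only [Finset.mem_filter] at hn ⊢
    refine ⟨hn.1, fun b hb hdvd => ?_⟩
    by_cases hpb : p ∣ b
    · exact hn.2.1 (hpb.trans hdvd)
    · exact hn.2.2 b (Finset.mem_filter.mpr ⟨hb, hpb⟩) hdvd
  have hglow : p * gcount D' L' - gcount D' L' ≤ gcount D L := by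
    rw [← hcard2]; exact Finset.card_le_card hsubset
  have hIH := ih m' hm' D' rfl (s+1) hD'2 hD'j L' hL'
  have hp2 : (2:ℝ) ≤ (p:ℝ) := by exact_mod_cast hpp.two_le
  have hprod : (∏ i ∈ Finset.range m, pf (j+i)) ≤ ∏ i ∈ Finset.range (m'+1), pf (s+i) := by
    have hsplit : m = (m'+1) + (m - (m'+1)) := by omega
    calc (∏ i ∈ Finset.range m, pf (j+i))
        ≤ ∏ i ∈ Finset.range (m'+1), pf (j+i) := by
          conv_lhs => rw [hsplit]
          rw [Finset.prod_range_add]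
          exact mul_le_of_le_one_right (Finset.prod_nonneg fun i _ => (pf_pos _).le)
            (Finset.prod_le_one (fun i _ => (pf_pos _).le) (fun i _ => pf_le_one _))
      _ ≤ ∏ i ∈ Finset.range (m'+1), pf (s+i) :=
          Finset.prod_le_prod (fun i _ => (pf_pos _).le) (fun i _ => pf_mono (by omega))
  have hpfs : pf s = 1 - 1/(p:ℝ) := by unfold pf; rw [hsp]
  have hre : (∏ i ∈ Finset.range (m'+1), pf (s+i))
      = (1 - 1/(p:ℝ)) * ∏ i ∈ Finset.range m', pf (s+1+i) := by
    rw [Finset.prod_range_succ' (fun i => pf (s+i)) m']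
    have h1 : (∏ i ∈ Finset.range m', pf (s+(i+1))) = ∏ i ∈ Finset.range m', pf (s+1+i) :=
      Finset.prod_congr rfl (fun i _ => by rw [show s+(i+1) = s+1+i from by omega])
    rw [h1, show s + 0 = s from by omega, hpfs]
    ring
  have hL'cast : (L:ℝ) = (p:ℝ) * (L':ℝ) := by exact_mod_cast hLpL
  have hfinal : (∏ i ∈ Finset.range m, pf (j+i)) * (L:ℝ)
      ≤ (p:ℝ) * (gcount D' L' : ℝ) - (gcount D' L' : ℝ) := by
    calc (∏ i ∈ Finset.range m, pf (j+i)) * (L:ℝ)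
        ≤ (∏ i ∈ Finset.range (m'+1), pf (s+i)) * (L:ℝ) :=
          mul_le_mul_of_nonneg_right hprod (by positivity)
      _ = ((p:ℝ)-1) * ((∏ i ∈ Finset.range m', pf (s+1+i)) * (L':ℝ)) := by
          rw [hre, hL'cast]
          have hpne : (p:ℝ) ≠ 0 := by linarith
          field_simp
      _ ≤ ((p:ℝ)-1) * ((gcount D' L' : ℝ)) :=
          mul_le_mul_of_nonneg_left hIH (by linarith)
      _ = (p:ℝ) * (gcount D' L' : ℝ) - (gcount D' L' : ℝ) := by ring
  have hle' : gcount D' L' ≤ p * gcount D' L' := Nat.le_mul_of_pos_left _ hpp.pos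
  calc (∏ i ∈ Finset.range m, pf (j+i)) * (L:ℝ)
      ≤ (p:ℝ) * (gcount D' L' : ℝ) - (gcount D' L' : ℝ) := hfinal
    _ = ((p * gcount D' L' - gcount D' L' : ℕ) : ℝ) := by
        rw [Nat.cast_sub hle']; push_cast; ring
    _ ≤ (gcount D L : ℝ) := by exact_mod_cast hglow

theorem stmt_16 (A B : Set ℕ) (hAB : MC2 A B) (k : ℕ) (hBfin : B.Finite)
    (hBcard : B.ncard = k) :
    (∏ i ∈ Finset.range k, (1 - 1 / ((Nat.nth Nat.Prime i : ℕ) : ℝ))) ≤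
      Filter.liminf (fun x : ℕ => (cnt A x : ℝ) / (x : ℝ)) Filter.atTop := by
  classical
  obtain ⟨hA, hB, hsum⟩ := hAB
  obtain ⟨a1, ha1, b1, hb1, hab1⟩ := hsum 1 one_pos
  have hb1' : b1 = 1 := Nat.dvd_one.mp (Dvd.intro_left a1 hab1.symm)
  have h1B : (1:ℕ) ∈ B := hb1' ▸ hb1
  have hk1 : 1 ≤ k := hBcard ▸ ((Set.ncard_pos hBfin).mpr ⟨1, h1B⟩)
  set D : Finset ℕ := hBfin.toFinset.erase 1 with hDdef
  have hDcard : D.card = k - 1 := by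
    rw [hDdef, Finset.card_erase_of_mem (hBfin.mem_toFinset.mpr h1B),
      ← Set.ncard_eq_toFinset_card B hBfin, hBcard]
  have hD2 : ∀ b ∈ D, 2 ≤ b := by
    intro b hb
    rw [hDdef, Finset.mem_erase, hBfin.mem_toFinset] at hb
    have := hB hb.2
    simp only [Set.mem_setOf_eq] at this
    omega
  set L := ∏ b ∈ D, b with hLdef
  have hLpos : 0 < L := Finset.prod_pos (fun b hb => by have := hD2 b hb; omega)
  have hLdvd : ∀ b ∈ D, b ∣ L := fun b hb => Finset.dvd_prod_of_mem _ hb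
  have hmain := main_density (k-1) D hDcard 0 hD2
    (fun b _ i hi => absurd hi (Nat.not_lt_zero i)) L hLdvd
  set c : ℝ := ∏ i ∈ Finset.range (k-1), pf i with hcdef
  have hmain' : c * (L:ℝ) ≤ (gcount D L : ℝ) := by
    have he : (∏ i ∈ Finset.range (k-1), pf (0 + i)) = c := by
      rw [hcdef]
      exact Finset.prod_congr rfl (fun i _ => by rw [Nat.zero_add])
    rwa [he] at hmain
  have hc0 : (0:ℝ) ≤ c := Finset.prod_nonneg (fun i _ => (pf_pos i).le)
  have hcntfin : ∀ x : ℕ, {a ∈ A | a ≤ x}.Finite :=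
    fun x => (Set.finite_Icc 1 x).subset (fun a ha => by
      have := hA ha.1; simp only [Set.mem_setOf_eq] at this ha ⊢
      exact Set.mem_Icc.mpr ⟨this, ha.2⟩)
  have hcnt_le : ∀ x : ℕ, cnt A x ≤ x := by
    intro x
    unfold cnt
    have hsub : {a ∈ A | a ≤ x} ⊆ ↑(Finset.Icc 1 x) := by
      intro a ha
      have := hA ha.1
      simp only [Set.mem_setOf_eq] at this ha
      simp only [Finset.coe_Icc, Set.mem_Icc]
      omega
    calc {a ∈ A | a ≤ x}.ncard ≤ (↑(Finset.Icc 1 x) : Set ℕ).ncard :=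
          Set.ncard_le_ncard hsub (Finset.finite_toSet _)
      _ = x := by rw [Set.ncard_coe_finset, Nat.card_Icc]; omega
  have hpoint : ∀ x : ℕ, c * ((x:ℝ) - (L:ℝ)) ≤ (cnt A x : ℝ) := by
    intro x
    have h1 : (x / L) * gcount D L ≤ gcount D x := by
      rw [← gcount_mul D hLdvd (x / L)]
      exact gcount_mono D (Nat.div_mul_le_self x L)
    have h2 : gcount D x ≤ cnt A x := by
      have hsub : ↑((Finset.Icc 1 x).filter (fun n => ∀ b ∈ D, ¬ b ∣ n)) ⊆ {a ∈ A | a ≤ x} := by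
        intro n hn
        simp only [Finset.coe_filter, Finset.mem_Icc, Set.mem_setOf_eq] at hn
        obtain ⟨⟨h1n, h2n⟩, havoid⟩ := hn
        refine ⟨?_, h2n⟩
        obtain ⟨a, haA, b, hbB, hab⟩ := hsum n (by omega)
        by_cases hbone : b = 1
        · subst hbone; rw [Nat.mul_one] at hab; exact hab ▸ haA
        · exact absurd (Dvd.intro_left a hab.symm)
            (havoid b (by rw [hDdef, Finset.mem_erase, hBfin.mem_toFinset]; exact ⟨hbone, hbB⟩))
      calc gcount D x
          = (↑((Finset.Icc 1 x).filter (fun n => ∀ b ∈ D, ¬ b ∣ n)) : Set ℕ).ncard :=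
            (Set.ncard_coe_finset _).symm
        _ ≤ cnt A x := Set.ncard_le_ncard hsub (hcntfin x)
    have h3 : (x:ℝ) - (L:ℝ) ≤ ((x / L * L : ℕ):ℝ) := by
      have h := Nat.lt_div_mul_add (a := x) hLpos
      have : (x:ℝ) < ((x / L * L : ℕ):ℝ) + (L:ℝ) := by exact_mod_cast h
      linarith
    calc c * ((x:ℝ) - (L:ℝ)) ≤ c * ((x/L*L:ℕ):ℝ) := mul_le_mul_of_nonneg_left h3 hc0
      _ = ((x/L:ℕ):ℝ) * (c * (L:ℝ)) := by push_cast; ring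
      _ ≤ ((x/L:ℕ):ℝ) * (gcount D L : ℝ) := mul_le_mul_of_nonneg_left hmain' (by positivity)
      _ = ((x/L * gcount D L : ℕ):ℝ) := by push_cast; ring
      _ ≤ (gcount D x : ℝ) := by exact_mod_cast h1
      _ ≤ (cnt A x : ℝ) := by exact_mod_cast h2
  have hhle : ∀ᶠ x : ℕ in atTop, c * (1 - (L:ℝ)/(x:ℝ)) ≤ (cnt A x : ℝ)/(x:ℝ) := by
    filter_upwards [Filter.eventually_gt_atTop 0] with x hx
    have hx0 : (0:ℝ) < (x:ℝ) := by exact_mod_cast hx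
    have h4 : c * (1 - (L:ℝ)/(x:ℝ)) = c * ((x:ℝ) - (L:ℝ)) / (x:ℝ) := by field_simp
    rw [h4]
    exact (div_le_div_iff_of_pos_right hx0).mpr (hpoint x)
  have htend : Filter.Tendsto (fun x : ℕ => c * (1 - (L:ℝ)/(x:ℝ))) atTop (nhds c) := by
    have h0 : Filter.Tendsto (fun x:ℕ => (L:ℝ)/(x:ℝ)) atTop (nhds 0) :=
      tendsto_const_div_atTop_nhds_zero_nat (L:ℝ)
    have h1 : Filter.Tendsto (fun x : ℕ => c * ((1:ℝ) - (L:ℝ)/(x:ℝ))) atTop (nhds (c * ((1:ℝ) - 0))) :=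
      Filter.Tendsto.mul tendsto_const_nhds (Filter.Tendsto.sub tendsto_const_nhds h0)
    simpa using h1
  have hliminf : c ≤ Filter.liminf (fun x : ℕ => (cnt A x:ℝ)/(x:ℝ)) atTop := by
    have hb1' : Filter.IsBoundedUnder (· ≥ ·) atTop (fun x : ℕ => c * (1 - (L:ℝ)/(x:ℝ))) :=
      htend.isBoundedUnder_ge
    have hb2 : Filter.IsBoundedUnder (· ≤ ·) atTop (fun x : ℕ => (cnt A x:ℝ)/(x:ℝ)) := by
      apply Filter.isBoundedUnder_of
      refine ⟨1, fun x => ?_⟩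
      rcases Nat.eq_zero_or_pos x with h | h
      · subst h; simp
      · have hx0 : (0:ℝ) < (x:ℝ) := by exact_mod_cast h
        rw [div_le_one hx0]
        exact_mod_cast hcnt_le x
    have := Filter.liminf_le_liminf hhle hb1' hb2.isCoboundedUnder_ge
    rwa [htend.liminf_eq] at this
  have hfin : (∏ i ∈ Finset.range k, (1 - 1/((Nat.nth Nat.Prime i:ℕ):ℝ))) ≤ c := by
    have h5 : (∏ i ∈ Finset.range k, pf i) ≤ c := by
      rw [show k = (k-1)+1 from by omega, Finset.prod_range_succ]
      exact mul_le_of_le_one_right hc0 (pf_le_one _)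
    exact le_of_eq_of_le (Finset.prod_congr rfl (fun i _ => rfl)).symm h5
  exact le_trans hfin hliminf
end
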